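/- arXiv:1911.10116 — 4 statements merged into one kernel-verified Lean document; each statement's English description precedes it below -/
import Mathlib

section
/- Consider a generations network with generation size K ≥ 2 in which positions {2,…,K} are partitioned into N ≥ 1 silos S_1,…,S_N, with observation sets Ψ_k = S_n for every position k ∈ S_n and Ψ_1 = {2,…,K}, and let r_i be the signal counts from the equilibrium weight recursion. Then agents in the first position eventually aggregate lim_{t→∞} r_{(t−1)K+1}/t = Σ_{n=1}^N (2|S_n|−1)/|S_n| signals per generation, and for each silo n and each position k ∈ S_n, lim_{t→∞} r_{(t−1)K+k}/t = (2|S_n|−1)/|S_n|. -/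
open Matrix Finset Filter

/-- The equilibrium weight vectors of the sequential social-learning model. -/
noncomputable def eqW (Net : ℕ → Finset ℕ) (i : ℕ) : ℕ → ℝ :=
  Nat.strongRecOn i (fun n prev =>
    let nb := (Net n).filter (fun j => j < n)
    if nb.Nonempty then
      let What : Matrix {j // j ∈ nb} (Fin (n - 1)) ℝ :=
        Matrix.of (fun j m => prev j.1 (Finset.mem_filter.mp j.2).2 (m.1 + 1))
      let beta : {j // j ∈ nb} → ℝ :=
        Matrix.vecMul (fun j => ∑ m, What j m) ((What * What.transpose)⁻¹)
      fun m => (if m = n then (1 : ℝ) else 0) +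
        ∑ j : {j // j ∈ nb}, beta j * prev j.1 (Finset.mem_filter.mp j.2).2 m
    else fun m => if m = n then (1 : ℝ) else 0)

/-- The number of signals aggregated by agent `i`: `r_i = Σ_j W_i(j)`. -/
noncomputable def rcount (Net : ℕ → Finset ℕ) (i : ℕ) : ℝ :=
  ∑ j ∈ Finset.range (i + 1), eqW Net i j

/-- The generations network with generation size `K` and observation sets `Ψ`:
`N(i) = ∅` for `1 ≤ i ≤ K`, and `N((t−1)K+k) = {(t−2)K+ψ : ψ ∈ Ψ_k}` for `t ≥ 2`,
`1 ≤ k ≤ K`. -/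
def genNet (K : ℕ) (Ψ : ℕ → Finset ℕ) : ℕ → Finset ℕ := fun i =>
  if i ≤ K then ∅
  else (Ψ ((i - 1) % K + 1)).image (fun ψ => ((i - 1) / K - 1) * K + ψ)

noncomputable def rhoSeq (s : ℝ) : ℕ → ℝ
  | 0 => 1
  | t+1 => 1 + s * rhoSeq s t ^ 2 / (s * rhoSeq s t - s + 1)

lemma rhoSeq_ge (s : ℝ) (hs : 1 ≤ s) : ∀ t : ℕ, 1 + (t : ℝ) ≤ rhoSeq s t := by
  intro t
  induction t with
  | zero => simp [rhoSeq]
  | succ t ih =>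
    have ht : (0:ℝ) ≤ (t:ℝ) := Nat.cast_nonneg t
    have h1 : (1:ℝ) ≤ rhoSeq s t := by linarith
    have hD0 : (0:ℝ) < s * rhoSeq s t - s + 1 := by nlinarith
    have key : rhoSeq s t ≤ s * rhoSeq s t ^ 2 / (s * rhoSeq s t - s + 1) := by
      rw [le_div_iff₀ hD0]; nlinarith
    have : 1 + ((t:ℝ)+1) ≤ 1 + s * rhoSeq s t ^ 2 / (s * rhoSeq s t - s + 1) := by nlinarith
    simpa [rhoSeq, Nat.cast_succ] using this

lemma rhoSeq_one_le (s : ℝ) (hs : 1 ≤ s) (t : ℕ) : (1:ℝ) ≤ rhoSeq s t := by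
  have h1 := rhoSeq_ge s hs t
  have h2 : (0:ℝ) ≤ (t:ℝ) := Nat.cast_nonneg t
  linarith

lemma rhoSeq_den_pos (s : ℝ) (hs : 1 ≤ s) (t : ℕ) :
    (0:ℝ) < s * rhoSeq s t - s + 1 := by
  have h1 := rhoSeq_one_le s hs t
  nlinarith

lemma rhoSeq_tendsto (s : ℝ) (hs : 1 ≤ s) :
    Tendsto (fun t : ℕ => rhoSeq s t / t) atTop (nhds ((2*s-1)/s)) := by
  set L : ℝ := (2*s-1)/s with hL
  have hs0 : (0:ℝ) < s := by linarith
  set d : ℕ → ℝ := fun t => rhoSeq s (t+1) - rhoSeq s t with hd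
  have hdval : ∀ t, d t = L + (s-1)^2 / (s * (s * rhoSeq s t - s + 1)) := by
    intro t
    have hD := rhoSeq_den_pos s hs t
    simp only [hd, rhoSeq, hL]
    rw [div_add_div _ _ hs0.ne' (mul_ne_zero hs0.ne' hD.ne'), eq_div_iff (mul_ne_zero hs0.ne' (mul_ne_zero hs0.ne' hD.ne'))]
    linear_combination (s*s) * div_mul_cancel₀ (s * rhoSeq s t ^ 2) hD.ne'
  have hdtend : Tendsto d atTop (nhds L) := by
    have hub : ∀ t : ℕ, d t ≤ L + (s-1)^2 * (1/((t:ℝ)+1)) := by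
      intro t
      rw [hdval]
      have hD := rhoSeq_den_pos s hs t
      have hg := rhoSeq_ge s hs t
      have ht1 : (0:ℝ) < (t:ℝ)+1 := by positivity
      have hDt : (t:ℝ)+1 ≤ s * (s * rhoSeq s t - s + 1) := by nlinarith
      have h2 : (s-1)^2 / (s * (s * rhoSeq s t - s + 1)) ≤ (s-1)^2 / ((t:ℝ)+1) :=
        div_le_div_of_nonneg_left (by positivity) ht1 hDt
      rw [mul_one_div]
      linarith
    have hlb : ∀ t : ℕ, L ≤ d t := by
      intro t
      rw [hdval]
      have hD := rhoSeq_den_pos s hs t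
      have : (0:ℝ) ≤ (s-1)^2 / (s * (s * rhoSeq s t - s + 1)) := by positivity
      linarith
    have hub_t : Tendsto (fun t : ℕ => L + (s-1)^2 * (1/((t:ℝ)+1))) atTop (nhds L) := by
      
      have h2 := (tendsto_one_div_add_atTop_nhds_zero_nat.const_mul ((s-1)^2)).const_add L
      simpa using h2
    exact tendsto_of_tendsto_of_tendsto_of_le_of_le tendsto_const_nhds hub_t hlb hub
  have hsum : ∀ n : ℕ, ∑ i ∈ range n, d i = rhoSeq s n - 1 := by
    intro n
    have := Finset.sum_range_sub (fun i => rhoSeq s i) n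
    simp only [hd]
    rw [this]
    simp [rhoSeq]
  have hces := hdtend.cesaro
  have hmain : Tendsto (fun n : ℕ => (rhoSeq s n - 1) / n) atTop (nhds L) := by
    refine hces.congr (fun n => ?_)
    rw [hsum]
    ring
  have h1n : Tendsto (fun n : ℕ => 1 / (n:ℝ)) atTop (nhds 0) := tendsto_one_div_atTop_nhds_zero_nat
  have hfin := hmain.add h1n
  rw [add_zero] at hfin
  refine hfin.congr (fun n => ?_)
  ring

lemma rhoSeq_shift_tendsto (s : ℝ) (hs : 1 ≤ s) :
    Tendsto (fun t : ℕ => rhoSeq s (t-1) / t) atTop (nhds ((2*s-1)/s)) := by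
  have hg : Tendsto (fun T : ℕ => rhoSeq s T / ((T:ℝ)+1)) atTop (nhds ((2*s-1)/s)) := by
    have h1 : Tendsto (fun T : ℕ => (T:ℝ)/((T:ℝ)+1)) atTop (nhds 1) := by
      simpa using tendsto_natCast_div_add_atTop (1 : ℝ)
    have h2 := (rhoSeq_tendsto s hs).mul h1
    rw [mul_one] at h2
    refine h2.congr' ?_
    filter_upwards [eventually_ge_atTop 1] with T hT
    have hT0 : (T:ℝ) ≠ 0 := by
      have : (0:ℝ) < T := by exact_mod_cast hT
      linarith
    field_simp
  have hcomp := hg.comp (tendsto_sub_atTop_nat 1)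
  exact hcomp.congr' (by
    filter_upwards [eventually_ge_atTop 1] with t ht
    simp only [Function.comp_apply]
    congr 1
    have h : t - 1 + 1 = t := Nat.succ_pred_eq_of_pos ht
    exact_mod_cast congrArg (Nat.cast (R := ℝ)) h)
/-- Unfolding of `eqW` when the neighborhood (restricted below `i`) is a given
nonempty finset `F`. -/
lemma eqW_pos (Net : ℕ → Finset ℕ) (i : ℕ) (F : Finset ℕ)
    (hF : (Net i).filter (fun j => j < i) = F) (hne : F.Nonempty) :
    eqW Net i = fun m => (if m = i then (1:ℝ) else 0) +
      ∑ j : {j // j ∈ F},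
        Matrix.vecMul
          (fun j' : {j // j ∈ F} =>
            ∑ m' : Fin (i-1),
              Matrix.of (fun (a : {j // j ∈ F}) (m'' : Fin (i-1)) => eqW Net a.1 (m''.1+1)) j' m')
          ((Matrix.of (fun (a : {j // j ∈ F}) (m'' : Fin (i-1)) => eqW Net a.1 (m''.1+1)) *
            (Matrix.of (fun (a : {j // j ∈ F}) (m'' : Fin (i-1)) => eqW Net a.1 (m''.1+1))).transpose)⁻¹) j
        * eqW Net j.1 m := by
  subst hF
  conv_lhs => rw [eqW, Nat.strongRecOn_eq]
  simp only [eqW]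
  rw [if_pos hne]

lemma eqW_empty (Net : ℕ → Finset ℕ) (i : ℕ)
    (hF : (Net i).filter (fun j => j < i) = ∅) :
    eqW Net i = fun m => if m = i then (1:ℝ) else 0 := by
  conv_lhs => rw [eqW, Nat.strongRecOn_eq]
  simp only [eqW]
  rw [hF, if_neg (by simp)]

/-- Convert a `Fin d`-indexed shifted sum into a `range` sum, given a support bound. -/
lemma sum_fin_shift (f : ℕ → ℝ) (d B : ℕ) (hB : B ≤ d) (h0 : f 0 = 0)
    (hf : ∀ m, B < m → f m = 0) :
    ∑ m : Fin d, f (m.1 + 1) = ∑ m ∈ Finset.range (B + 1), f m := by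
  rw [Fin.sum_univ_eq_sum_range (fun m => f (m+1)) d]
  rw [show ∑ m ∈ Finset.range d, f (m+1) = ∑ m ∈ Finset.range B, f (m+1) from
    (Finset.sum_subset (Finset.range_subset_range.2 hB) (fun m _ hm => hf (m+1)
      (by simp only [Finset.mem_range] at hm ⊢; omega))).symm]
  rw [Finset.sum_range_succ']
  simp [h0]

/-- Shrink a `range` sum using a support bound. -/
lemma sum_ext (f : ℕ → ℝ) (A B : ℕ) (hAB : A ≤ B) (h : ∀ m, A ≤ m → f m = 0) :
    ∑ m ∈ Finset.range B, f m = ∑ m ∈ Finset.range A, f m :=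
  (Finset.sum_subset (Finset.range_subset_range.2 hAB) (fun m _ hm => h m
    (by simp only [Finset.mem_range] at hm ⊢; omega))).symm

/-- Decoding of generation/position from an agent index. -/
lemma decode {K : ℕ} (τ₁ k₁ τ₂ k₂ : ℕ) (h1 : 1 ≤ k₁) (h2 : k₁ ≤ K) (h3 : 1 ≤ k₂)
    (h4 : k₂ ≤ K) (h : τ₁*K + k₁ = τ₂*K + k₂) : τ₁ = τ₂ ∧ k₁ = k₂ := by
  have hττ : τ₁ = τ₂ := by
    rcases Nat.lt_trichotomy τ₁ τ₂ with hlt | heq | hgt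
    · exfalso
      have : τ₁ * K + K ≤ τ₂ * K := by
        have := Nat.mul_le_mul_right K (Nat.succ_le_of_lt hlt)
        rwa [Nat.succ_mul] at this
      omega
    · exact heq
    · exfalso
      have : τ₂ * K + K ≤ τ₁ * K := by
        have := Nat.mul_le_mul_right K (Nat.succ_le_of_lt hgt)
        rwa [Nat.succ_mul] at this
      omega
  subst hττ
  omega


lemma silo_sum (s : Finset ℕ) (a b' : ℕ) (ha : a ∈ s) (hb : b' ∈ s) (c γ : ℝ) :
    ∑ ψ ∈ s, ((if ψ = a then (1:ℝ) else 0) + c) * ((if ψ = b' then (1:ℝ) else 0) - γ)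
      = (if a = b' then 1 else 0) + c - γ - (s.card : ℝ) * (c * γ) := by
  classical
  have hexp : ∀ ψ, ((if ψ = a then (1:ℝ) else 0) + c) * ((if ψ = b' then (1:ℝ) else 0) - γ)
      = ((if ψ = a then (1:ℝ) else 0) * (if ψ = b' then (1:ℝ) else 0)
        + c * (if ψ = b' then (1:ℝ) else 0) - γ * (if ψ = a then (1:ℝ) else 0)) - c*γ := by
    intro ψ; ring
  rw [Finset.sum_congr rfl (fun ψ _ => hexp ψ)]
  rw [Finset.sum_sub_distrib, Finset.sum_sub_distrib, Finset.sum_add_distrib]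
  have h1 : ∑ ψ ∈ s, (if ψ = a then (1:ℝ) else 0) * (if ψ = b' then (1:ℝ) else 0)
      = if a = b' then 1 else 0 := by
    have : ∀ ψ, (if ψ = a then (1:ℝ) else 0) * (if ψ = b' then (1:ℝ) else 0)
        = if ψ = a then (if ψ = b' then (1:ℝ) else 0) else 0 := by
      intro ψ; split <;> simp
    rw [Finset.sum_congr rfl (fun ψ _ => this ψ), Finset.sum_ite_eq' s a
      (fun ψ => if ψ = b' then (1:ℝ) else 0), if_pos ha]
  have h2 : ∑ ψ ∈ s, c * (if ψ = b' then (1:ℝ) else 0) = c := by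
    rw [← Finset.mul_sum, Finset.sum_ite_eq' s b' (fun _ => (1:ℝ)), if_pos hb, mul_one]
  have h3 : ∑ ψ ∈ s, γ * (if ψ = a then (1:ℝ) else 0) = γ := by
    rw [← Finset.mul_sum, Finset.sum_ite_eq' s a (fun _ => (1:ℝ)), if_pos ha, mul_one]
  rw [h1, h2, h3, Finset.sum_const]
  push_cast
  ring

lemma silo_sum2 (s : Finset ℕ) (b' : ℕ) (hb : b' ∈ s) (r γ : ℝ) :
    ∑ ψ ∈ s, r * ((if ψ = b' then (1:ℝ) else 0) - γ) = r - (s.card : ℝ) * (r * γ) := by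
  classical
  have hexp : ∀ ψ, r * ((if ψ = b' then (1:ℝ) else 0) - γ)
      = r * (if ψ = b' then (1:ℝ) else 0) - r*γ := by intro ψ; ring
  rw [Finset.sum_congr rfl (fun ψ _ => hexp ψ), Finset.sum_sub_distrib,
    ← Finset.mul_sum, Finset.sum_ite_eq' s b' (fun _ => (1:ℝ)), if_pos hb, mul_one,
    Finset.sum_const]
  push_cast
  ring

def SiloInv (K N : ℕ) (S : Fin N → Finset ℕ) (Ψ : ℕ → Finset ℕ) (t : ℕ) : Prop :=
  ∀ n : Fin N, ∀ k ∈ S n,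
    (∀ m, eqW (genNet K Ψ) (t*K+k) m ≠ 0 →
        m = t*K+k ∨ ∃ τ, τ < t ∧ ∃ k', k' ∈ S n ∧ m = τ*K+k') ∧
    (∀ k' ∈ S n, ∑ m ∈ Finset.range ((t+1)*K+1),
        eqW (genNet K Ψ) (t*K+k) m * eqW (genNet K Ψ) (t*K+k') m
        = (if k = k' then (1:ℝ) else 0) + (rhoSeq ((S n).card : ℝ) t - 1)) ∧
    (∑ m ∈ Finset.range ((t+1)*K+1), eqW (genNet K Ψ) (t*K+k) m
        = rhoSeq ((S n).card : ℝ) t)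

section Core

variable {K N : ℕ} {S : Fin N → Finset ℕ} {Ψ : ℕ → Finset ℕ}

lemma core (hK : 2 ≤ K) (hN : 1 ≤ N)
    (hSnonempty : ∀ n, (S n).Nonempty)
    (hSdisjoint : ∀ n n', n ≠ n' → Disjoint (S n) (S n'))
    (hScover : (Finset.univ : Finset (Fin N)).biUnion S = Finset.Icc 2 K)
    (t : ℕ) (hInv : SiloInv K N S Ψ t)
    (p : ℕ) (hp1 : 1 ≤ p) (hpK : p ≤ K)
    (T : Finset (Fin N)) (hT : T.Nonempty) (hΨp : Ψ p = T.biUnion S) :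
    ∀ m, eqW (genNet K Ψ) ((t+1)*K + p) m
      = (if m = (t+1)*K + p then (1:ℝ) else 0) +
        ∑ n ∈ T, (rhoSeq ((S n).card : ℝ) t /
            (((S n).card : ℝ) * rhoSeq ((S n).card : ℝ) t - ((S n).card : ℝ) + 1)) *
          ∑ ψ ∈ S n, eqW (genNet K Ψ) (t*K + ψ) m := by
  classical
  -- membership bounds
  have hS_sub : ∀ n : Fin N, ∀ k ∈ S n, 2 ≤ k ∧ k ≤ K := by
    intro n k hk
    have : k ∈ Finset.Icc 2 K := by
      rw [← hScover]; exact Finset.mem_biUnion.2 ⟨n, Finset.mem_univ n, hk⟩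
    simpa using this
  set i := (t+1)*K + p with hi
  set F : Finset ℕ := (T.biUnion S).image (fun ψ => t*K + ψ) with hFdef
  have hKt : (t+1)*K = t*K + K := by ring
  have hfilter : ((genNet K Ψ) i).filter (fun j => j < i) = F := by
    have hK0 : 0 < K := by omega
    have hiK : ¬ i ≤ K := by
      have : 1 * K ≤ (t+1)*K := Nat.mul_le_mul_right K (by omega)
      simp only [one_mul] at this
      omega
    have him : i - 1 = (p-1) + (t+1)*K := by omega
    have hmod : (i-1) % K = p - 1 := by
      rw [him, Nat.add_mul_mod_self_right, Nat.mod_eq_of_lt (by omega)]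
    have hdiv : (i-1) / K = t + 1 := by
      rw [him, Nat.add_mul_div_right _ _ hK0, Nat.div_eq_of_lt (by omega)]
      omega
    have hNet : (genNet K Ψ) i = (T.biUnion S).image (fun ψ => t*K + ψ) := by
      unfold genNet
      rw [if_neg hiK, hmod, hdiv]
      simp only [Nat.add_sub_cancel]
      rw [show p - 1 + 1 = p by omega, hΨp]
    rw [hNet, hFdef]
    apply Finset.filter_true_of_mem
    intro j hj
    obtain ⟨ψ, hψ, rfl⟩ := Finset.mem_image.1 hj
    obtain ⟨n, _, hn⟩ := Finset.mem_biUnion.1 hψ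
    have := hS_sub n ψ hn
    omega
  have hFne : F.Nonempty := by
    obtain ⟨n, hn⟩ := hT
    obtain ⟨k, hk⟩ := hSnonempty n
    exact ⟨t*K+k, Finset.mem_image.2 ⟨k, Finset.mem_biUnion.2 ⟨n, hn, hk⟩, rfl⟩⟩
  -- silo-of function
  have hNfin : (0:ℕ) < N := hN
  set sil : ℕ → Fin N := fun ψ => if h : ∃ n, ψ ∈ S n then h.choose else ⟨0, hNfin⟩ with hsildef
  have hsil : ∀ n : Fin N, ∀ ψ ∈ S n, sil ψ = n := by
    intro n ψ hψ
    have hex : ∃ n', ψ ∈ S n' := ⟨n, hψ⟩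
    simp only [hsildef, dif_pos hex]
    by_contra hne
    exact (Finset.disjoint_left.1 (hSdisjoint _ _ hne) hex.choose_spec) hψ
  -- scalar data
  set s : Fin N → ℝ := fun n => ((S n).card : ℝ) with hsdef
  set ρ : Fin N → ℝ := fun n => rhoSeq (s n) t with hρdef
  set D : Fin N → ℝ := fun n => s n * ρ n - s n + 1 with hDdef
  set b : Fin N → ℝ := fun n => ρ n / D n with hbdef
  set c : Fin N → ℝ := fun n => ρ n - 1 with hcdef
  set γ : Fin N → ℝ := fun n => c n / D n with hγdef
  have hs1 : ∀ n, 1 ≤ s n := by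
    intro n
    simp only [hsdef]
    exact_mod_cast Finset.card_pos.2 (hSnonempty n)
  have hρ1 : ∀ n, 1 ≤ ρ n := fun n => rhoSeq_one_le _ (hs1 n) t
  have hD0 : ∀ n, 0 < D n := fun n => rhoSeq_den_pos _ (hs1 n) t
  have hDc : ∀ n, D n = 1 + s n * c n := by
    intro n; simp only [hDdef, hcdef]; ring
  -- the index type
  set ι := {j // j ∈ F}
  -- decode / support facts for generation-t agents
  have hsupp : ∀ n : Fin N, ∀ ψ ∈ S n, ∀ m, eqW (genNet K Ψ) (t*K+ψ) m ≠ 0 →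
      (2 ≤ m ∧ m ≤ (t+1)*K) ∧ ∃ τ, τ ≤ t ∧ ∃ k', k' ∈ S n ∧ m = τ*K+k' := by
    intro n ψ hψ m hm
    have hKt : (t+1)*K = t*K + K := by ring
    rcases (hInv n ψ hψ).1 m hm with h | ⟨τ, hτ, k', hk', rfl⟩
    · obtain ⟨h2, hK'⟩ := hS_sub n ψ hψ
      constructor
      · omega
      · exact ⟨t, le_refl t, ψ, hψ, h⟩
    · obtain ⟨h2, hK'⟩ := hS_sub n k' hk'
      constructor
      · have : τ*K ≤ t*K := Nat.mul_le_mul_right K (by omega)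
        constructor <;> omega
      · exact ⟨τ, by omega, k', hk', rfl⟩
  -- clean-up rewriting helpers
  have hred : ∀ ψ : ℕ, t*K + ψ - t*K = ψ := fun ψ => by omega
  have hmemF : ∀ j : ℕ, j ∈ F → ∃ ψ, ψ ∈ T.biUnion S ∧ j = t*K + ψ := by
    intro j hj
    obtain ⟨ψ, hψ, rfl⟩ := Finset.mem_image.1 (hFdef ▸ hj)
    exact ⟨ψ, hψ, rfl⟩
  have hinj : ∀ x ∈ T.biUnion S, ∀ y ∈ T.biUnion S, t*K + x = t*K + y → x = y := by
    intro x _ y _ h; omega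
  have hpd : Set.PairwiseDisjoint (↑T : Set (Fin N)) S := by
    intro a _ b _ hab; exact hSdisjoint a b hab
  have sum_ι : ∀ g : ℕ → ℝ, (∑ j : {j // j ∈ F}, g j.1) = ∑ n ∈ T, ∑ ψ ∈ S n, g (t*K+ψ) := by
    intro g
    rw [show (∑ j : {j // j ∈ F}, g j.1) = ∑ j ∈ F, g j from Finset.sum_coe_sort F g]
    rw [hFdef, Finset.sum_image hinj, Finset.sum_biUnion hpd]
  have halg : ∀ n, γ n * D n = c n := by
    intro n
    have := (hD0 n).ne'
    rw [hγdef]; exact div_mul_cancel₀ (c n) this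
  have hDsc : ∀ n, D n - s n * c n = 1 := by
    intro n; rw [hDc n]; ring
  -- support basics for generation-t agents
  have hz : ∀ n : Fin N, ∀ ψ ∈ S n, eqW (genNet K Ψ) (t*K+ψ) 0 = 0 := by
    intro n ψ hψ
    by_contra h0
    have := (hsupp n ψ hψ 0 h0).1.1
    omega
  have hvan : ∀ n : Fin N, ∀ ψ ∈ S n, ∀ mm, (t+1)*K < mm → eqW (genNet K Ψ) (t*K+ψ) mm = 0 := by
    intro n ψ hψ mm hmm
    by_contra h0
    have := (hsupp n ψ hψ mm h0).1.2
    omega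
  -- start: unfold eqW at i
  intro m
  rw [eqW_pos (genNet K Ψ) i F hfilter hFne]
  simp only []
  set Wm : Matrix {j // j ∈ F} (Fin (i-1)) ℝ :=
    Matrix.of (fun (a : {j // j ∈ F}) (m'' : Fin (i-1)) => eqW (genNet K Ψ) a.1 (m''.1+1)) with hWmdef
  set Gm : Matrix {j // j ∈ F} {j // j ∈ F} ℝ := Wm * Wm.transpose with hGmdef
  set u : {j // j ∈ F} → ℝ := fun j' => ∑ m' : Fin (i-1), Wm j' m' with hudef
  have hile : (t+1)*K ≤ i - 1 := by omega
  -- the Gram matrix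
  have hGram : ∀ j j' : {j // j ∈ F}, Gm j j' =
      if sil (j.1 - t*K) = sil (j'.1 - t*K) then
        (if j.1 = j'.1 then (1:ℝ) else 0) + c (sil (j.1 - t*K)) else 0 := by
    intro j j'
    obtain ⟨ψ₁, hψ₁U, hj1⟩ := hmemF j.1 j.2
    obtain ⟨ψ₂, hψ₂U, hj2⟩ := hmemF j'.1 j'.2
    obtain ⟨n₁, -, hψ₁S⟩ := Finset.mem_biUnion.1 hψ₁U
    obtain ⟨n₂, -, hψ₂S⟩ := Finset.mem_biUnion.1 hψ₂U
    have hsil1 : sil (j.1 - t*K) = n₁ := by rw [hj1, hred]; exact hsil n₁ ψ₁ hψ₁S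
    have hsil2 : sil (j'.1 - t*K) = n₂ := by rw [hj2, hred]; exact hsil n₂ ψ₂ hψ₂S
    have hGval : Gm j j' = ∑ mm ∈ Finset.range ((t+1)*K+1),
        eqW (genNet K Ψ) j.1 mm * eqW (genNet K Ψ) j'.1 mm := by
      rw [hGmdef, Matrix.mul_apply]
      have hh : ∀ m' : Fin (i-1), Wm j m' * Wm.transpose m' j' =
          (fun mm => eqW (genNet K Ψ) j.1 mm * eqW (genNet K Ψ) j'.1 mm) (m'.1+1) := by
        intro m'; rw [Matrix.transpose_apply]; rfl
      rw [Finset.sum_congr rfl (fun m' _ => hh m')]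
      refine sum_fin_shift (fun mm => eqW (genNet K Ψ) j.1 mm * eqW (genNet K Ψ) j'.1 mm)
        (i-1) ((t+1)*K) hile ?_ ?_
      · show eqW (genNet K Ψ) j.1 0 * eqW (genNet K Ψ) j'.1 0 = 0
        rw [hj1, hz n₁ ψ₁ hψ₁S, zero_mul]
      · intro mm hmm
        show eqW (genNet K Ψ) j.1 mm * eqW (genNet K Ψ) j'.1 mm = 0
        rw [hj1, hvan n₁ ψ₁ hψ₁S mm hmm, zero_mul]
    by_cases hnn : sil (j.1 - t*K) = sil (j'.1 - t*K)
    · have hn12 : n₁ = n₂ := by rw [hsil1, hsil2] at hnn; exact hnn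
      have hψ₂S' : ψ₂ ∈ S n₁ := by rw [hn12]; exact hψ₂S
      have hIP := (hInv n₁ ψ₁ hψ₁S).2.1 ψ₂ hψ₂S'
      rw [if_pos hnn, hGval, hsil1, hj1, hj2, hIP, hcdef]
      simp only [hρdef, hsdef]
      have hiff : (t*K + ψ₁ = t*K + ψ₂) ↔ (ψ₁ = ψ₂) := by omega
      by_cases hψψ : ψ₁ = ψ₂
      · rw [if_pos hψψ, if_pos (hiff.2 hψψ)]
      · rw [if_neg hψψ, if_neg (fun hc => hψψ (hiff.1 hc))]
    · rw [if_neg hnn, hGval]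
      apply Finset.sum_eq_zero
      intro mm _
      by_contra hne0
      have h1 : eqW (genNet K Ψ) j.1 mm ≠ 0 := fun h => hne0 (by rw [h, zero_mul])
      have h2 : eqW (genNet K Ψ) j'.1 mm ≠ 0 := fun h => hne0 (by rw [h, mul_zero])
      rw [hj1] at h1; rw [hj2] at h2
      obtain ⟨-, τ₁, hτ₁, k₁, hk₁, hm1⟩ := hsupp n₁ ψ₁ hψ₁S mm h1
      obtain ⟨-, τ₂, hτ₂, k₂, hk₂, hm2⟩ := hsupp n₂ ψ₂ hψ₂S mm h2
      have hb1 := hS_sub n₁ k₁ hk₁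
      have hb2 := hS_sub n₂ k₂ hk₂
      obtain ⟨-, hkeq⟩ := decode τ₁ k₁ τ₂ k₂ (by omega) hb1.2 (by omega) hb2.2
        (by rw [← hm1, ← hm2])
      have hn12 : n₁ ≠ n₂ := fun h => hnn (by rw [hsil1, hsil2, h])
      exact Finset.disjoint_left.1 (hSdisjoint n₁ n₂ hn12) hk₁ (hkeq ▸ hk₂)
  -- row sums
  have hu : ∀ j : {j // j ∈ F}, u j = ρ (sil (j.1 - t*K)) := by
    intro j
    obtain ⟨ψ₁, hψ₁U, hj1⟩ := hmemF j.1 j.2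
    obtain ⟨n₁, -, hψ₁S⟩ := Finset.mem_biUnion.1 hψ₁U
    have hsil1 : sil (j.1 - t*K) = n₁ := by rw [hj1, hred]; exact hsil n₁ ψ₁ hψ₁S
    show (∑ m' : Fin (i-1), Wm j m') = ρ (sil (j.1 - t*K))
    have hh : ∀ m' : Fin (i-1), Wm j m' = (fun mm => eqW (genNet K Ψ) j.1 mm) (m'.1+1) :=
      fun _ => rfl
    rw [Finset.sum_congr rfl (fun m' _ => hh m')]
    rw [sum_fin_shift (fun mm => eqW (genNet K Ψ) j.1 mm) (i-1) ((t+1)*K) hile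
      (by show eqW (genNet K Ψ) j.1 0 = 0; rw [hj1]; exact hz n₁ ψ₁ hψ₁S)
      (by intro mm hmm; show eqW (genNet K Ψ) j.1 mm = 0; rw [hj1]; exact hvan n₁ ψ₁ hψ₁S mm hmm)]
    rw [hsil1, hj1, (hInv n₁ ψ₁ hψ₁S).2.2]
  -- the inverse matrix
  set x : {j // j ∈ F} → ℝ := fun j => b (sil (j.1 - t*K)) with hxdef
  set Bm : Matrix {j // j ∈ F} {j // j ∈ F} ℝ := Matrix.of (fun j j' =>
    if sil (j.1 - t*K) = sil (j'.1 - t*K) then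
      (if j.1 = j'.1 then (1:ℝ) else 0) - γ (sil (j.1 - t*K)) else 0) with hBmdef
  have hGB : Gm * Bm = 1 := by
    ext j j''
    rw [Matrix.mul_apply]
    obtain ⟨ψa, hψaU, hja⟩ := hmemF j.1 j.2
    obtain ⟨ψb, hψbU, hjb⟩ := hmemF j''.1 j''.2
    obtain ⟨na, hnaT, hψaS⟩ := Finset.mem_biUnion.1 hψaU
    obtain ⟨nb', hnbT, hψbS⟩ := Finset.mem_biUnion.1 hψbU
    have hsila : sil (j.1 - t*K) = na := by rw [hja, hred]; exact hsil na ψa hψaS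
    have hsilb : sil (j''.1 - t*K) = nb' := by rw [hjb, hred]; exact hsil nb' ψb hψbS
    have hterm : ∀ j' : {j // j ∈ F}, Gm j j' * Bm j' j'' =
        (fun a => (if na = sil (a - t*K) then (if j.1 = a then (1:ℝ) else 0) + c na else 0)
          * (if sil (a - t*K) = nb' then (if a = j''.1 then (1:ℝ) else 0) - γ (sil (a - t*K)) else 0)) j'.1 := by
      intro j'
      rw [hGram j j', hsila]
      simp only [hBmdef, Matrix.of_apply, hsilb]
    rw [Finset.sum_congr rfl (fun j' _ => hterm j'),
      sum_ι (fun a => (if na = sil (a - t*K) then (if j.1 = a then (1:ℝ) else 0) + c na else 0)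
        * (if sil (a - t*K) = nb' then (if a = j''.1 then (1:ℝ) else 0) - γ (sil (a - t*K)) else 0))]
    have hinner : ∀ n ∈ T, (∑ ψ ∈ S n,
        (if na = sil (t*K + ψ - t*K) then (if j.1 = t*K + ψ then (1:ℝ) else 0) + c na else 0)
          * (if sil (t*K + ψ - t*K) = nb' then (if t*K + ψ = j''.1 then (1:ℝ) else 0) - γ (sil (t*K + ψ - t*K)) else 0))
        = if n = na ∧ n = nb' then
            ((if ψa = ψb then (1:ℝ) else 0) + c na - γ na - ((S na).card : ℝ) * (c na * γ na))
          else 0 := by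
      intro n hnT
      have hstep : ∀ ψ ∈ S n,
          (if na = sil (t*K + ψ - t*K) then (if j.1 = t*K + ψ then (1:ℝ) else 0) + c na else 0)
            * (if sil (t*K + ψ - t*K) = nb' then (if t*K + ψ = j''.1 then (1:ℝ) else 0) - γ (sil (t*K + ψ - t*K)) else 0)
          = (if na = n then (if ψ = ψa then (1:ℝ) else 0) + c na else 0)
            * (if n = nb' then (if ψ = ψb then (1:ℝ) else 0) - γ n else 0) := by
        intro ψ hψ
        rw [hred, hsil n ψ hψ]
        have e1 : (j.1 = t*K + ψ) = (ψ = ψa) := propext ⟨fun h => by omega, fun h => by omega⟩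
        have e2 : (t*K + ψ = j''.1) = (ψ = ψb) := propext ⟨fun h => by omega, fun h => by omega⟩
        simp only [e1, e2]
      refine (Finset.sum_congr rfl hstep).trans ?_
      by_cases hna : n = na
      · by_cases hnb : n = nb'
        · rw [if_pos ⟨hna, hnb⟩]
          subst hna
          subst hnb
          have hsimp : ∑ ψ ∈ S n,
              (if n = n then (if ψ = ψa then (1:ℝ) else 0) + c n else 0)
                * (if n = n then (if ψ = ψb then (1:ℝ) else 0) - γ n else 0)
              = ∑ ψ ∈ S n, ((if ψ = ψa then (1:ℝ) else 0) + c n)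
                * ((if ψ = ψb then (1:ℝ) else 0) - γ n) :=
            Finset.sum_congr rfl (fun ψ _ => by rw [if_pos rfl, if_pos rfl])
          rw [hsimp, silo_sum (S n) ψa ψb hψaS hψbS (c n) (γ n)]
        · rw [if_neg (by intro hc; exact hnb hc.2)]
          apply Finset.sum_eq_zero
          intro ψ _
          rw [if_neg hnb, mul_zero]
      · rw [if_neg (by intro hc; exact hna hc.1)]
        apply Finset.sum_eq_zero
        intro ψ _
        rw [if_neg (by intro hc; exact hna hc.symm), zero_mul]
    refine (Finset.sum_congr rfl hinner).trans ?_
    by_cases hab : na = nb'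
    · rw [Finset.sum_eq_single na
        (by intro n hnT hne; exact if_neg (by intro hc; exact hne hc.1))
        (by intro hni; exact absurd hnaT hni)]
      rw [if_pos ⟨rfl, hab⟩]
      have hjiff : (j = j'') ↔ (ψa = ψb) := by
        constructor
        · intro h; rw [h] at hja; omega
        · intro h; apply Subtype.ext; rw [hja, hjb, h]
      rw [Matrix.one_apply]
      have hgD : γ na * (1 + s na * c na) = c na := by rw [← hDc na]; exact halg na
      by_cases hψab : ψa = ψb
      · rw [if_pos hψab, if_pos (hjiff.2 hψab)]
        have hcard : ((S na).card : ℝ) = s na := rfl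
        rw [hcard]
        nlinarith [hgD]
      · rw [if_neg hψab, if_neg (by intro hc; exact hψab (hjiff.1 hc))]
        have hcard : ((S na).card : ℝ) = s na := rfl
        rw [hcard]
        nlinarith [hgD]
    · rw [Finset.sum_eq_zero (fun n _ => by
        refine if_neg ?_
        intro hc
        exact hab (by rw [← hc.1, hc.2])), Matrix.one_apply,
        if_neg (by
          intro hc
          apply hab
          rw [← hsila, ← hsilb, hc])]

  have hGinv : Gm⁻¹ = Bm := Matrix.inv_eq_right_inv hGB
  have hbeta : ∀ j' : {j // j ∈ F}, Matrix.vecMul u Gm⁻¹ j' = b (sil (j'.1 - t*K)) := by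
    intro j'
    rw [hGinv]
    obtain ⟨ψb, hψbU, hjb⟩ := hmemF j'.1 j'.2
    obtain ⟨nb', hnbT, hψbS⟩ := Finset.mem_biUnion.1 hψbU
    have hsilb : sil (j'.1 - t*K) = nb' := by rw [hjb, hred]; exact hsil nb' ψb hψbS
    have hvm : Matrix.vecMul u Bm j' = ∑ j : {j // j ∈ F}, u j * Bm j j' := by
      simp [Matrix.vecMul, dotProduct]
    rw [hvm]
    have hterm : ∀ j : {j // j ∈ F}, u j * Bm j j' =
        (fun a => ρ (sil (a - t*K)) * (if sil (a - t*K) = nb' then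
          (if a = j'.1 then (1:ℝ) else 0) - γ (sil (a - t*K)) else 0)) j.1 := by
      intro j
      rw [hu j]
      simp only [hBmdef, Matrix.of_apply, hsilb]
    rw [Finset.sum_congr rfl (fun j _ => hterm j),
      sum_ι (fun a => ρ (sil (a - t*K)) * (if sil (a - t*K) = nb' then
        (if a = j'.1 then (1:ℝ) else 0) - γ (sil (a - t*K)) else 0))]
    have hinner : ∀ n ∈ T, (∑ ψ ∈ S n, ρ (sil (t*K + ψ - t*K)) *
        (if sil (t*K + ψ - t*K) = nb' then
          (if t*K + ψ = j'.1 then (1:ℝ) else 0) - γ (sil (t*K + ψ - t*K)) else 0))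
        = if n = nb' then ρ nb' - ((S nb').card : ℝ) * (ρ nb' * γ nb') else 0 := by
      intro n hnT
      have hstep : ∀ ψ ∈ S n, ρ (sil (t*K + ψ - t*K)) *
          (if sil (t*K + ψ - t*K) = nb' then
            (if t*K + ψ = j'.1 then (1:ℝ) else 0) - γ (sil (t*K + ψ - t*K)) else 0)
          = ρ n * (if n = nb' then (if ψ = ψb then (1:ℝ) else 0) - γ n else 0) := by
        intro ψ hψ
        rw [hred, hsil n ψ hψ]
        have e2 : (t*K + ψ = j'.1) = (ψ = ψb) := propext ⟨fun h => by omega, fun h => by omega⟩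
        simp only [e2]
      refine (Finset.sum_congr rfl hstep).trans ?_
      by_cases hnb : n = nb'
      · subst hnb
        rw [if_pos rfl]
        have hsimp : ∑ ψ ∈ S n, ρ n * (if n = n then (if ψ = ψb then (1:ℝ) else 0) - γ n else 0)
            = ∑ ψ ∈ S n, ρ n * ((if ψ = ψb then (1:ℝ) else 0) - γ n) :=
          Finset.sum_congr rfl (fun ψ _ => by rw [if_pos rfl])
        rw [hsimp, silo_sum2 (S n) ψb hψbS (ρ n) (γ n)]
      · rw [if_neg hnb]
        apply Finset.sum_eq_zero
        intro ψ _
        rw [if_neg hnb, mul_zero]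
    refine (Finset.sum_congr rfl hinner).trans ?_
    rw [Finset.sum_eq_single nb' (by intro n hnT hne; exact if_neg hne)
      (by intro hni; exact absurd hnbT hni), if_pos rfl, hsilb]
    have hcard : ((S nb').card : ℝ) = s nb' := rfl
    rw [hcard, hbdef]
    have hD0' := (hD0 nb').ne'
    rw [hγdef, eq_div_iff hD0']
    field_simp
    linear_combination (ρ nb') * (hDsc nb')
  -- conclusion
  have hfin : ∀ j : {j // j ∈ F}, Matrix.vecMul u Gm⁻¹ j * eqW (genNet K Ψ) j.1 m
      = (fun a => b (sil (a - t*K)) * eqW (genNet K Ψ) a m) j.1 := by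
    intro j; rw [hbeta j]
  rw [Finset.sum_congr rfl (fun j _ => hfin j),
    sum_ι (fun a => b (sil (a - t*K)) * eqW (genNet K Ψ) a m)]
  congr 1
  apply Finset.sum_congr rfl
  intro n hnT
  refine (Finset.sum_congr rfl (fun ψ hψ => by rw [hred, hsil n ψ hψ])).trans ?_
  rw [← Finset.mul_sum]




lemma supp_lemma (hK : 2 ≤ K)
    (hScover : (Finset.univ : Finset (Fin N)).biUnion S = Finset.Icc 2 K)
    (t : ℕ) (hInv : SiloInv K N S Ψ t) (n : Fin N) (ψ : ℕ) (hψ : ψ ∈ S n) :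
    ∀ m, eqW (genNet K Ψ) (t*K+ψ) m ≠ 0 →
      (2 ≤ m ∧ m ≤ (t+1)*K) ∧ ∃ τ, τ ≤ t ∧ ∃ k', k' ∈ S n ∧ m = τ*K+k' := by
  have hS_sub : ∀ n : Fin N, ∀ k ∈ S n, 2 ≤ k ∧ k ≤ K := by
    intro n k hk
    have : k ∈ Finset.Icc 2 K := by
      rw [← hScover]; exact Finset.mem_biUnion.2 ⟨n, Finset.mem_univ n, hk⟩
    simpa using this
  intro m hm
  have hKt : (t+1)*K = t*K + K := by ring
  rcases (hInv n ψ hψ).1 m hm with h | ⟨τ, hτ, k', hk', rfl⟩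
  · obtain ⟨h2, hK'⟩ := hS_sub n ψ hψ
    exact ⟨by omega, t, le_refl t, ψ, hψ, h⟩
  · obtain ⟨h2, hK'⟩ := hS_sub n k' hk'
    have : τ*K ≤ t*K := Nat.mul_le_mul_right K (by omega)
    exact ⟨by omega, τ, by omega, k', hk', rfl⟩

lemma V_vanish (hK : 2 ≤ K)
    (hScover : (Finset.univ : Finset (Fin N)).biUnion S = Finset.Icc 2 K)
    (t : ℕ) (hInv : SiloInv K N S Ψ t) (n : Fin N) :
    ∀ m, (t+1)*K + 1 ≤ m → (∑ ψ ∈ S n, eqW (genNet K Ψ) (t*K+ψ) m) = 0 := by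
  intro m hm
  apply Finset.sum_eq_zero
  intro ψ hψ
  by_contra h0
  have := (supp_lemma hK hScover t hInv n ψ hψ m h0).1.2
  omega

lemma Vsum (hK : 2 ≤ K)
    (hScover : (Finset.univ : Finset (Fin N)).biUnion S = Finset.Icc 2 K)
    (t : ℕ) (hInv : SiloInv K N S Ψ t) (n : Fin N) (R : ℕ) (hR : (t+1)*K+1 ≤ R) :
    ∑ m ∈ Finset.range R, (∑ ψ ∈ S n, eqW (genNet K Ψ) (t*K+ψ) m)
      = ((S n).card : ℝ) * rhoSeq ((S n).card : ℝ) t := by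
  rw [sum_ext _ ((t+1)*K+1) R hR (fun m hm => V_vanish hK hScover t hInv n m hm)]
  rw [Finset.sum_comm]
  rw [Finset.sum_congr rfl (fun ψ hψ => (hInv n ψ hψ).2.2)]
  rw [Finset.sum_const]
  simp [mul_comm]

lemma VVsum (hK : 2 ≤ K)
    (hScover : (Finset.univ : Finset (Fin N)).biUnion S = Finset.Icc 2 K)
    (t : ℕ) (hInv : SiloInv K N S Ψ t) (n : Fin N) (R : ℕ) (hR : (t+1)*K+1 ≤ R) :
    ∑ m ∈ Finset.range R, ((∑ ψ ∈ S n, eqW (genNet K Ψ) (t*K+ψ) m) *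
        (∑ ψ ∈ S n, eqW (genNet K Ψ) (t*K+ψ) m))
      = ((S n).card : ℝ) + ((S n).card : ℝ) * ((S n).card : ℝ) *
          (rhoSeq ((S n).card : ℝ) t - 1) := by
  have hvan : ∀ m, (t+1)*K+1 ≤ m →
      (∑ ψ ∈ S n, eqW (genNet K Ψ) (t*K+ψ) m) * (∑ ψ ∈ S n, eqW (genNet K Ψ) (t*K+ψ) m) = 0 := by
    intro m hm; rw [V_vanish hK hScover t hInv n m hm, zero_mul]
  rw [sum_ext _ ((t+1)*K+1) R hR hvan]
  have hexp : ∀ m ∈ Finset.range ((t+1)*K+1),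
      (∑ ψ ∈ S n, eqW (genNet K Ψ) (t*K+ψ) m) * (∑ ψ ∈ S n, eqW (genNet K Ψ) (t*K+ψ) m)
      = ∑ ψ ∈ S n, ∑ ψ' ∈ S n, eqW (genNet K Ψ) (t*K+ψ) m * eqW (genNet K Ψ) (t*K+ψ') m := by
    intro m _
    rw [Finset.sum_mul_sum]
  rw [Finset.sum_congr rfl hexp, Finset.sum_comm]
  have hswap : ∀ ψ ∈ S n, ∑ m ∈ Finset.range ((t+1)*K+1),
      (∑ ψ' ∈ S n, eqW (genNet K Ψ) (t*K+ψ) m * eqW (genNet K Ψ) (t*K+ψ') m)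
      = ∑ ψ' ∈ S n, ((if ψ = ψ' then (1:ℝ) else 0) + (rhoSeq ((S n).card : ℝ) t - 1)) := by
    intro ψ hψ
    rw [Finset.sum_comm]
    exact Finset.sum_congr rfl (fun ψ' hψ' => (hInv n ψ hψ).2.1 ψ' hψ')
  rw [Finset.sum_congr rfl hswap]
  have hone : ∀ ψ ∈ S n, ∑ ψ' ∈ S n, ((if ψ = ψ' then (1:ℝ) else 0) + (rhoSeq ((S n).card : ℝ) t - 1))
      = 1 + ((S n).card : ℝ) * (rhoSeq ((S n).card : ℝ) t - 1) := by
    intro ψ hψ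
    rw [Finset.sum_add_distrib, Finset.sum_const]
    have : ∑ ψ' ∈ S n, (if ψ = ψ' then (1:ℝ) else 0) = 1 := by
      rw [Finset.sum_ite_eq (S n) ψ (fun _ => (1:ℝ)), if_pos hψ]
    rw [this]
    simp [mul_comm]
  rw [Finset.sum_congr rfl hone, Finset.sum_const]
  simp
  ring

lemma inv_all (hK : 2 ≤ K) (hN : 1 ≤ N)
    (hSnonempty : ∀ n, (S n).Nonempty)
    (hSdisjoint : ∀ n n', n ≠ n' → Disjoint (S n) (S n'))
    (hScover : (Finset.univ : Finset (Fin N)).biUnion S = Finset.Icc 2 K)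
    (hΨsilo : ∀ n : Fin N, ∀ k ∈ S n, Ψ k = S n) :
    ∀ t, SiloInv K N S Ψ t := by
  have hS_sub : ∀ n : Fin N, ∀ k ∈ S n, 2 ≤ k ∧ k ≤ K := by
    intro n k hk
    have : k ∈ Finset.Icc 2 K := by
      rw [← hScover]; exact Finset.mem_biUnion.2 ⟨n, Finset.mem_univ n, hk⟩
    simpa using this
  intro t
  induction t with
  | zero =>
    intro n k hk
    obtain ⟨hk2, hkK⟩ := hS_sub n k hk
    have hWk : ∀ k'' , k'' ≤ K → 1 ≤ k'' → eqW (genNet K Ψ) (0*K+k'') =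
        fun m => if m = k'' then (1:ℝ) else 0 := by
      intro k'' hk''K hk''1
      rw [show 0*K+k'' = k'' by omega]
      apply eqW_empty
      have : genNet K Ψ k'' = ∅ := by unfold genNet; rw [if_pos hk''K]
      rw [this, Finset.filter_empty]
    refine ⟨?_, ?_, ?_⟩
    · intro m hm
      simp only [hWk k hkK (by omega)] at hm
      left
      by_cases hmk : m = k
      · omega
      · rw [if_neg hmk] at hm; exact absurd rfl hm
    · intro k' hk'
      obtain ⟨hk2', hkK'⟩ := hS_sub n k' hk'
      rw [hWk k hkK (by omega), hWk k' hkK' (by omega)]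
      have hcomb : ∀ m, (if m = k then (1:ℝ) else 0) * (if m = k' then (1:ℝ) else 0)
          = if m = k then (if m = k' then (1:ℝ) else 0) else 0 := by
        intro m; split <;> simp
      rw [Finset.sum_congr rfl (fun m _ => hcomb m),
        Finset.sum_ite_eq' (Finset.range ((0+1)*K+1)) k (fun m => if m = k' then (1:ℝ) else 0),
        if_pos (Finset.mem_range.2 (by omega))]
      simp [rhoSeq]
    · rw [hWk k hkK (by omega)]
      rw [Finset.sum_ite_eq' (Finset.range ((0+1)*K+1)) k (fun _ => (1:ℝ)),
        if_pos (Finset.mem_range.2 (by omega))]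
      simp [rhoSeq]
  | succ t ih =>
    -- generation t+2 agents, built from generation t+1 data (index t in SiloInv)
    intro n k hk
    obtain ⟨hk2, hkK⟩ := hS_sub n k hk
    set sR : ℝ := ((S n).card : ℝ) with hsR
    set ρ : ℝ := rhoSeq sR t with hρ
    set D : ℝ := sR * ρ - sR + 1 with hD
    set bb : ℝ := ρ / D with hbb
    have hs1 : (1:ℝ) ≤ sR := by
      rw [hsR]; exact_mod_cast Finset.card_pos.2 (hSnonempty n)
    have hρ1 : (1:ℝ) ≤ ρ := rhoSeq_one_le _ hs1 t
    have hD0 : (0:ℝ) < D := rhoSeq_den_pos _ hs1 t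
    have hWall : ∀ k' ∈ S n, ∀ m, eqW (genNet K Ψ) ((t+1)*K+k') m
        = (if m = (t+1)*K+k' then (1:ℝ) else 0) +
          bb * ∑ ψ ∈ S n, eqW (genNet K Ψ) (t*K + ψ) m := by
      intro k' hk'
      obtain ⟨hk2', hkK'⟩ := hS_sub n k' hk'
      intro m
      have hcore := core hK hN hSnonempty hSdisjoint hScover t ih k' (by omega) hkK'
        ({n} : Finset (Fin N)) ⟨n, Finset.mem_singleton_self n⟩
        (by rw [Finset.singleton_biUnion]; exact hΨsilo n k' hk') m
      rw [hcore, Finset.sum_singleton]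
    have hKt : (t+1)*K = t*K + K := by ring
    have hKt2 : (t+1+1)*K = (t+1)*K + K := by ring
    have hV0 : ∀ m, (t+1)*K + 1 ≤ m → (∑ ψ ∈ S n, eqW (genNet K Ψ) (t*K+ψ) m) = 0 :=
      V_vanish hK hScover t ih n
    refine ⟨?_, ?_, ?_⟩
    · -- support
      intro m hm
      rw [hWall k hk m] at hm
      by_cases hmi : m = (t+1)*K+k
      · left; exact hmi
      · right
        rw [if_neg hmi, zero_add] at hm
        have hVne : (∑ ψ ∈ S n, eqW (genNet K Ψ) (t*K+ψ) m) ≠ 0 := by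
          intro h0; rw [h0, mul_zero] at hm; exact hm rfl
        obtain ⟨ψ, hψ, hne⟩ := Finset.exists_ne_zero_of_sum_ne_zero hVne
        obtain ⟨-, τ, hτ, k', hk', hmeq⟩ := supp_lemma hK hScover t ih n ψ hψ m hne
        exact ⟨τ, by omega, k', hk', hmeq⟩
    · -- inner products
      intro k' hk'
      obtain ⟨hk2', hkK'⟩ := hS_sub n k' hk'
      have hprod : ∀ m ∈ Finset.range ((t+1+1)*K+1),
          eqW (genNet K Ψ) ((t+1)*K+k) m * eqW (genNet K Ψ) ((t+1)*K+k') m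
          = (if m = (t+1)*K+k then (1:ℝ) else 0) * (if m = (t+1)*K+k' then (1:ℝ) else 0)
            + bb * ((if m = (t+1)*K+k then (1:ℝ) else 0) * (∑ ψ ∈ S n, eqW (genNet K Ψ) (t*K+ψ) m))
            + bb * ((if m = (t+1)*K+k' then (1:ℝ) else 0) * (∑ ψ ∈ S n, eqW (genNet K Ψ) (t*K+ψ) m))
            + bb^2 * ((∑ ψ ∈ S n, eqW (genNet K Ψ) (t*K+ψ) m) * (∑ ψ ∈ S n, eqW (genNet K Ψ) (t*K+ψ) m)) := by
        intro m _
        rw [hWall k hk m, hWall k' hk' m]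
        ring
      rw [Finset.sum_congr rfl hprod]
      rw [Finset.sum_add_distrib, Finset.sum_add_distrib, Finset.sum_add_distrib]
      rw [← Finset.mul_sum, ← Finset.mul_sum, ← Finset.mul_sum]
      have hP1 : ∑ m ∈ Finset.range ((t+1+1)*K+1),
          (if m = (t+1)*K+k then (1:ℝ) else 0) * (if m = (t+1)*K+k' then (1:ℝ) else 0)
          = if k = k' then 1 else 0 := by
        have hcomb : ∀ m, (if m = (t+1)*K+k then (1:ℝ) else 0) * (if m = (t+1)*K+k' then (1:ℝ) else 0)
            = if m = (t+1)*K+k then (if m = (t+1)*K+k' then (1:ℝ) else 0) else 0 := by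
          intro m; split <;> simp
        rw [Finset.sum_congr rfl (fun m _ => hcomb m),
          Finset.sum_ite_eq' (Finset.range ((t+1+1)*K+1)) ((t+1)*K+k)
            (fun m => if m = (t+1)*K+k' then (1:ℝ) else 0),
          if_pos (Finset.mem_range.2 (by omega))]
        have : ((t+1)*K+k = (t+1)*K+k') = (k = k') := propext ⟨fun h => by omega, fun h => by omega⟩
        simp only [this]
      have hP2 : ∀ kk, 2 ≤ kk → kk ≤ K → ∑ m ∈ Finset.range ((t+1+1)*K+1),
          (if m = (t+1)*K+kk then (1:ℝ) else 0) * (∑ ψ ∈ S n, eqW (genNet K Ψ) (t*K+ψ) m)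
          = 0 := by
        intro kk h2 hkk
        have hcomb : ∀ m, (if m = (t+1)*K+kk then (1:ℝ) else 0) * (∑ ψ ∈ S n, eqW (genNet K Ψ) (t*K+ψ) m)
            = if m = (t+1)*K+kk then (∑ ψ ∈ S n, eqW (genNet K Ψ) (t*K+ψ) m) else 0 := by
          intro m; split <;> simp
        rw [Finset.sum_congr rfl (fun m _ => hcomb m),
          Finset.sum_ite_eq' (Finset.range ((t+1+1)*K+1)) ((t+1)*K+kk)
            (fun m => (∑ ψ ∈ S n, eqW (genNet K Ψ) (t*K+ψ) m)),
          if_pos (Finset.mem_range.2 (by omega))]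
        exact hV0 _ (by omega)
      rw [hP1, hP2 k hk2 hkK, hP2 k' hk2' hkK',
        VVsum hK hScover t ih n ((t+1+1)*K+1) (by omega)]
      -- algebra
      have hrq : rhoSeq sR (t+1) = 1 + sR * ρ^2 / D := by rw [hρ, hD]; rfl
      have hDeq : ((S n).card : ℝ) + ((S n).card : ℝ) * ((S n).card : ℝ) * (rhoSeq (((S n).card : ℝ)) t - 1) = sR * D := by rw [hD, hρ, hsR]; ring
      rw [hDeq, hrq, hbb, mul_zero]
      have hD0' := hD0.ne'
      set e : ℝ := (if k = k' then (1:ℝ) else 0) with he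
      field_simp
      ring
    · -- row sums
      have hsum : ∀ m ∈ Finset.range ((t+1+1)*K+1),
          eqW (genNet K Ψ) ((t+1)*K+k) m
          = (if m = (t+1)*K+k then (1:ℝ) else 0)
            + bb * (∑ ψ ∈ S n, eqW (genNet K Ψ) (t*K+ψ) m) := fun m _ => hWall k hk m
      rw [Finset.sum_congr rfl hsum, Finset.sum_add_distrib, ← Finset.mul_sum]
      rw [Finset.sum_ite_eq' (Finset.range ((t+1+1)*K+1)) ((t+1)*K+k) (fun _ => (1:ℝ)),
        if_pos (Finset.mem_range.2 (by omega)),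
        Vsum hK hScover t ih n ((t+1+1)*K+1) (by omega)]
      have hrq : rhoSeq sR (t+1) = 1 + sR * ρ^2 / D := by rw [hρ, hD]; rfl
      rw [← hsR, ← hρ, hrq, hbb]
      field_simp

lemma rc_silo (hK : 2 ≤ K) (hN : 1 ≤ N)
    (hSnonempty : ∀ n, (S n).Nonempty)
    (hSdisjoint : ∀ n n', n ≠ n' → Disjoint (S n) (S n'))
    (hScover : (Finset.univ : Finset (Fin N)).biUnion S = Finset.Icc 2 K)
    (hΨsilo : ∀ n : Fin N, ∀ k ∈ S n, Ψ k = S n)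
    (t : ℕ) (n : Fin N) (k : ℕ) (hk : k ∈ S n) :
    rcount (genNet K Ψ) (t*K + k) = rhoSeq ((S n).card : ℝ) t := by
  have hS_sub : ∀ n : Fin N, ∀ k ∈ S n, 2 ≤ k ∧ k ≤ K := by
    intro n k hk
    have : k ∈ Finset.Icc 2 K := by
      rw [← hScover]; exact Finset.mem_biUnion.2 ⟨n, Finset.mem_univ n, hk⟩
    simpa using this
  obtain ⟨hk2, hkK⟩ := hS_sub n k hk
  cases t with
  | zero =>
    have hW : eqW (genNet K Ψ) (0*K+k) = fun m => if m = k then (1:ℝ) else 0 := by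
      rw [show 0*K+k = k by omega]
      apply eqW_empty
      have : genNet K Ψ k = ∅ := by unfold genNet; rw [if_pos hkK]
      rw [this, Finset.filter_empty]
    show (∑ m ∈ Finset.range (0*K+k+1), eqW (genNet K Ψ) (0*K+k) m) = _
    rw [hW]
    rw [Finset.sum_ite_eq' (Finset.range (0*K+k+1)) k (fun _ => (1:ℝ)),
      if_pos (Finset.mem_range.2 (by omega))]
    simp [rhoSeq]
  | succ t =>
    have hInv := inv_all hK hN hSnonempty hSdisjoint hScover hΨsilo (t+1)
    obtain ⟨ha, -, hc⟩ := hInv n k hk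
    have hKt : (t+1)*K = t*K + K := by ring
    have hKt2 : (t+1+1)*K = (t+1)*K + K := by ring
    have hvan : ∀ m, (t+1)*K+k+1 ≤ m → eqW (genNet K Ψ) ((t+1)*K+k) m = 0 := by
      intro m hm
      by_contra h0
      rcases ha m h0 with h | ⟨τ, hτ, k', hk', hmeq⟩
      · omega
      · obtain ⟨h2', hK'⟩ := hS_sub n k' hk'
        have : τ*K ≤ t*K := Nat.mul_le_mul_right K (by omega)
        omega
    show (∑ m ∈ Finset.range ((t+1)*K+k+1), eqW (genNet K Ψ) ((t+1)*K+k) m) = _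
    rw [← sum_ext (fun m => eqW (genNet K Ψ) ((t+1)*K+k) m) ((t+1)*K+k+1) ((t+1+1)*K+1)
      (by omega) hvan]
    exact hc

lemma rc_pos1 (hK : 2 ≤ K) (hN : 1 ≤ N)
    (hSnonempty : ∀ n, (S n).Nonempty)
    (hSdisjoint : ∀ n n', n ≠ n' → Disjoint (S n) (S n'))
    (hScover : (Finset.univ : Finset (Fin N)).biUnion S = Finset.Icc 2 K)
    (hΨ1 : Ψ 1 = Finset.Icc 2 K)
    (hΨsilo : ∀ n : Fin N, ∀ k ∈ S n, Ψ k = S n)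
    (t : ℕ) :
    rcount (genNet K Ψ) ((t+1)*K + 1)
      = 1 + ∑ n : Fin N, (rhoSeq ((S n).card : ℝ) (t+1) - 1) := by
  have hInv := inv_all hK hN hSnonempty hSdisjoint hScover hΨsilo t
  have hUcover : Ψ 1 = (Finset.univ : Finset (Fin N)).biUnion S := by rw [hΨ1, hScover]
  have hcore := core hK hN hSnonempty hSdisjoint hScover t hInv 1 (le_refl 1) (by omega)
    Finset.univ ⟨⟨0, hN⟩, Finset.mem_univ _⟩ hUcover
  have hKt : (t+1)*K = t*K + K := by ring
  show (∑ m ∈ Finset.range ((t+1)*K+1+1), eqW (genNet K Ψ) ((t+1)*K+1) m) = _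
  rw [Finset.sum_congr rfl (fun m _ => hcore m), Finset.sum_add_distrib]
  rw [Finset.sum_ite_eq' (Finset.range ((t+1)*K+1+1)) ((t+1)*K+1) (fun _ => (1:ℝ)),
    if_pos (Finset.mem_range.2 (by omega))]
  congr 1
  rw [Finset.sum_comm]
  apply Finset.sum_congr rfl
  intro n _
  rw [← Finset.mul_sum, Vsum hK hScover t hInv n ((t+1)*K+1+1) (by omega)]
  have hs1 : (1:ℝ) ≤ ((S n).card : ℝ) := by
    exact_mod_cast Finset.card_pos.2 (hSnonempty n)
  have hD0 := (rhoSeq_den_pos ((S n).card : ℝ) hs1 t).ne'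
  have hrq : rhoSeq ((S n).card : ℝ) (t+1)
      = 1 + ((S n).card : ℝ) * (rhoSeq ((S n).card : ℝ) t)^2 /
        (((S n).card : ℝ) * rhoSeq ((S n).card : ℝ) t - ((S n).card : ℝ) + 1) := rfl
  rw [hrq]
  field_simp
  ring


end Core

/-- In a generations network with `K ≥ 2` agents per generation
where positions `{2,…,K}` are partitioned into `N ≥ 1` silos `S_1,…,S_N`, each
position `k ∈ S_n` observes exactly its own silo (`Ψ_k = S_n`) and position `1`
(the executives) observes all silos (`Ψ_1 = {2,…,K}`). Then executives eventually
aggregate `Σ_n (2|S_n|−1)/|S_n|` signals per generation, and each position in silo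
`n` eventually aggregates `(2|S_n|−1)/|S_n|` signals per generation. -/
theorem information_silos (K N : ℕ) (hK : 2 ≤ K) (hN : 1 ≤ N)
    (S : Fin N → Finset ℕ)
    (hSnonempty : ∀ n, (S n).Nonempty)
    (hSdisjoint : ∀ n n', n ≠ n' → Disjoint (S n) (S n'))
    (hScover : (Finset.univ : Finset (Fin N)).biUnion S = Finset.Icc 2 K)
    (Ψ : ℕ → Finset ℕ)
    (hΨ1 : Ψ 1 = Finset.Icc 2 K)
    (hΨsilo : ∀ n : Fin N, ∀ k ∈ S n, Ψ k = S n) :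
    Tendsto (fun t : ℕ => rcount (genNet K Ψ) ((t - 1) * K + 1) / (t : ℝ)) atTop
      (nhds (∑ n : Fin N, (2 * ((S n).card : ℝ) - 1) / ((S n).card : ℝ))) ∧
    (∀ n : Fin N, ∀ k ∈ S n,
      Tendsto (fun t : ℕ => rcount (genNet K Ψ) ((t - 1) * K + k) / (t : ℝ)) atTop
        (nhds ((2 * ((S n).card : ℝ) - 1) / ((S n).card : ℝ)))) := by
  have hs1 : ∀ n : Fin N, (1:ℝ) ≤ ((S n).card : ℝ) := fun n => by
    exact_mod_cast Finset.card_pos.2 (hSnonempty n)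
  constructor
  · have h0 : Tendsto (fun t : ℕ => (1 - (N:ℝ)) * (1/(t:ℝ))) atTop (nhds 0) := by
      simpa using (tendsto_one_div_atTop_nhds_zero_nat).const_mul ((1:ℝ) - N)
    have h1 : Tendsto (fun t : ℕ => ∑ n : Fin N, rhoSeq ((S n).card : ℝ) (t-1) / t) atTop
        (nhds (∑ n : Fin N, (2*((S n).card : ℝ)-1)/((S n).card : ℝ))) :=
      tendsto_finset_sum _ (fun n _ => rhoSeq_shift_tendsto _ (hs1 n))
    have hlim := h0.add h1
    rw [zero_add] at hlim
    refine hlim.congr' ?_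
    filter_upwards [eventually_ge_atTop 2] with t ht
    have ht0 : (t:ℝ) ≠ 0 := Nat.cast_ne_zero.2 (by omega)
    have h1' : t - 1 = (t - 2) + 1 := by omega
    have h2 : rcount (genNet K Ψ) ((t-1)*K+1)
        = 1 + ∑ n : Fin N, (rhoSeq ((S n).card : ℝ) (t-1) - 1) := by
      rw [h1']
      exact rc_pos1 hK hN hSnonempty hSdisjoint hScover hΨ1 hΨsilo (t-2)
    rw [h2, Finset.sum_sub_distrib, Finset.sum_const, Finset.card_univ, Fintype.card_fin,
      ← Finset.sum_div]
    field_simp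
    ring
  · intro n k hk
    refine (rhoSeq_shift_tendsto ((S n).card : ℝ) (hs1 n)).congr (fun t => ?_)
    rw [rc_silo hK hN hSnonempty hSdisjoint hScover hΨsilo (t-1) n k hk]
end

section
/- Let M and M′ be networks whose signal counts r_i and r′_i (from the equilibrium weight recursion) satisfy lim_{i→∞}(r_i/i) > lim_{i→∞}(r′_i/i) > 0, both limits existing. Then for every utility threshold v̄ ∈ (−1/4, 0) there exists π > 0 such that for every σ with 0 < 1/σ² ≤ π: the set {I ∈ ℕ : v_σ(r_i) ≥ v̄ for all i ≥ I} is nonempty with least element I (social learning strongly attains v̄ by agent I in M), the set {i ∈ ℕ : v_σ(r′_i) ≥ v̄} is nonempty with least element i′ (social learning weakly attains v̄ by agent i′ in M′), and I < i′. -/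
open Matrix Finset Filter

open MeasureTheory ProbabilityTheory Real

/-- The expected equilibrium welfare of an agent aggregating `r` signals when the
private signal variance is `σ²`:
`v_σ(r) = −½ ∫ (eˣ/(1+eˣ) − 1)² dN(2r/σ², 4r/σ²)(x) − ½ ∫ (eˣ/(1+eˣ))² dN(−2r/σ², 4r/σ²)(x)`. -/
noncomputable def welfare (σ r : ℝ) : ℝ :=
  -(1 / 2) * ∫ x, (Real.exp x / (1 + Real.exp x) - 1) ^ 2
      ∂(gaussianReal (2 * r / σ ^ 2) (Real.toNNReal (4 * r / σ ^ 2)))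
  - (1 / 2) * ∫ x, (Real.exp x / (1 + Real.exp x)) ^ 2
      ∂(gaussianReal (-(2 * r / σ ^ 2)) (Real.toNNReal (4 * r / σ ^ 2)))



open MeasureTheory ProbabilityTheory Real
open scoped NNReal ENNReal

namespace SLAux

noncomputable def psi (t z : ℝ) : ℝ :=
  Real.exp (-(t/2)) / (4 * Real.cosh (Real.sqrt t * z)) * gaussianPDFReal 0 1 z

noncomputable def Fint (t : ℝ) : ℝ := ∫ z : ℝ, psi t z

lemma psi_nonneg (t z : ℝ) : 0 ≤ psi t z := by
  have h1 : 0 < Real.cosh (Real.sqrt t * z) := Real.cosh_pos _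
  have h2 := gaussianPDFReal_nonneg 0 1 z
  have h3 := Real.exp_pos (-(t/2))
  unfold psi; positivity

lemma psi_meas (t : ℝ) : Measurable (psi t) := by
  unfold psi
  exact (measurable_const.div ((Real.continuous_cosh.measurable.comp
    (measurable_const.mul measurable_id)).const_mul 4)).mul (measurable_gaussianPDFReal 0 1)

lemma psi_le (t z : ℝ) : psi t z ≤ Real.exp (-(t/2)) / 4 * gaussianPDFReal 0 1 z := by
  have h1 : (1:ℝ) ≤ Real.cosh (Real.sqrt t * z) := Real.one_le_cosh _
  have h2 := gaussianPDFReal_nonneg 0 1 z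
  have h3 := (Real.exp_pos (-(t/2))).le
  unfold psi
  gcongr
  · linarith

lemma integrable_psi (t : ℝ) : Integrable (psi t) := by
  refine Integrable.mono ((integrable_gaussianPDFReal 0 1).const_mul
    (Real.exp (-(t/2)) / 4)) (psi_meas t).aestronglyMeasurable (ae_of_all _ fun z => ?_)
  rw [Real.norm_eq_abs, Real.norm_eq_abs, abs_of_nonneg (psi_nonneg t z)]
  refine le_trans (psi_le t z) (le_abs_self _)

lemma Fint_le (t : ℝ) : Fint t ≤ Real.exp (-(t/2)) / 4 := by
  have h := integral_mono (integrable_psi t)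
    ((integrable_gaussianPDFReal 0 1).const_mul (Real.exp (-(t/2)) / 4)) (psi_le t)
  calc Fint t ≤ ∫ z : ℝ, Real.exp (-(t/2)) / 4 * gaussianPDFReal 0 1 z := h
  _ = Real.exp (-(t/2)) / 4 := by
      rw [integral_const_mul, integral_gaussianPDFReal_eq_one 0 one_ne_zero, mul_one]

lemma Fint_anti {t1 t2 : ℝ} (h0 : 0 ≤ t1) (h12 : t1 ≤ t2) : Fint t2 ≤ Fint t1 := by
  refine integral_mono (integrable_psi t2) (integrable_psi t1) fun z => ?_
  unfold psi
  have hc1 : 0 < Real.cosh (Real.sqrt t1 * z) := Real.cosh_pos _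
  have hcc : Real.cosh (Real.sqrt t1 * z) ≤ Real.cosh (Real.sqrt t2 * z) := by
    rw [Real.cosh_le_cosh, abs_mul, abs_mul]
    have h12' : Real.sqrt t1 ≤ Real.sqrt t2 := Real.sqrt_le_sqrt h12
    rw [abs_of_nonneg (Real.sqrt_nonneg _), abs_of_nonneg (Real.sqrt_nonneg _)]
    exact mul_le_mul_of_nonneg_right h12' (abs_nonneg z)
  have hee : Real.exp (-(t2/2)) ≤ Real.exp (-(t1/2)) := by
    apply Real.exp_le_exp.mpr; linarith
  have h2 := gaussianPDFReal_nonneg 0 1 z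
  apply mul_le_mul_of_nonneg_right _ h2
  apply div_le_div₀ (Real.exp_pos _).le hee (by linarith)
  linarith

lemma gaussianPDFReal_one (z : ℝ) :
    gaussianPDFReal 0 1 z = (Real.sqrt (2 * π))⁻¹ * Real.exp (-(z^2/2)) := by
  unfold gaussianPDFReal
  norm_num
  left
  ring

lemma Fint_ge (t : ℝ) (ht : 0 ≤ t) :
    Real.exp (-(t/2)) / (4 * Real.sqrt (1 + t)) ≤ Fint t := by
  have h2pi : (0:ℝ) < 2 * π := by positivity
  have h1t : (0:ℝ) < 1 + t := by linarith
  have hlow : ∀ z : ℝ, Real.exp (-(t/2)) / 4 * ((Real.sqrt (2 * π))⁻¹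
      * Real.exp (-((1+t)/2) * z^2)) ≤ psi t z := by
    intro z
    unfold psi
    rw [gaussianPDFReal_one]
    have hch : Real.cosh (Real.sqrt t * z) ≤ Real.exp (t * z^2 / 2) := by
      refine le_trans (Real.cosh_le_exp_half_sq _) ?_
      rw [mul_pow, Real.sq_sqrt ht, mul_div_assoc]
    have hc1 : 0 < Real.cosh (Real.sqrt t * z) := Real.cosh_pos _
    have hE : Real.exp (-(z^2/2)) = Real.exp (-((1+t)/2) * z^2) * Real.exp (t * z^2/2) := by
      rw [← Real.exp_add]; congr 1; ring
    have hs : (0:ℝ) < Real.sqrt (2 * π) := Real.sqrt_pos.mpr h2pi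
    rw [div_mul_eq_mul_div, div_mul_eq_mul_div, div_le_div_iff₀ (by norm_num) (by positivity), hE]
    have hhint := mul_le_mul_of_nonneg_left hch
      (by positivity : (0:ℝ) ≤ 4 * (Real.exp (-(t/2)) * ((Real.sqrt (2*π))⁻¹
        * Real.exp (-((1+t)/2) * z^2))))
    nlinarith [hhint]
  have hintlow : Integrable (fun z : ℝ => Real.exp (-(t/2)) / 4 * ((Real.sqrt (2 * π))⁻¹
      * Real.exp (-((1+t)/2) * z^2))) := by
    exact (((integrable_exp_neg_mul_sq (by positivity : (0:ℝ) < (1+t)/2)).const_mul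
      _).const_mul _)
  have h := integral_mono hintlow (integrable_psi t) hlow
  calc Real.exp (-(t/2)) / (4 * Real.sqrt (1 + t))
      = Real.exp (-(t/2)) / 4 * ((Real.sqrt (2 * π))⁻¹ * Real.sqrt (π / ((1+t)/2))) := by
        have e1 : π / ((1+t)/2) = 2 * π / (1 + t) := by field_simp
        have hs : (0:ℝ) < Real.sqrt (2*π) := Real.sqrt_pos.mpr h2pi
        have hst : (0:ℝ) < Real.sqrt (1+t) := Real.sqrt_pos.mpr h1t
        rw [e1, Real.sqrt_div h2pi.le]
        field_simp
    _ = ∫ z : ℝ, Real.exp (-(t/2)) / 4 * ((Real.sqrt (2 * π))⁻¹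
        * Real.exp (-((1+t)/2) * z^2)) := by
        rw [integral_const_mul, integral_const_mul, integral_gaussian]
    _ ≤ Fint t := h

lemma integral_gaussianReal_eq (m : ℝ) {V : ℝ≥0} (hV : V ≠ 0) (h : ℝ → ℝ) :
    ∫ x, h x ∂(gaussianReal m V) = ∫ x, h x * gaussianPDFReal m V x := by
  rw [gaussianReal_of_var_ne_zero m hV]
  have hgd : gaussianPDF m V
      = fun x => ((Real.toNNReal (gaussianPDFReal m V x) : ℝ≥0) : ℝ≥0∞) := by
    funext x; rfl
  rw [hgd, integral_withDensity_eq_integral_smul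
    ((measurable_gaussianPDFReal m V).real_toNNReal) h]
  refine integral_congr_ae (ae_of_all _ fun x => ?_)
  simp only [NNReal.smul_def, smul_eq_mul]
  rw [Real.coe_toNNReal _ (gaussianPDFReal_nonneg m V x), mul_comm]

lemma integrable_bnd {h : ℝ → ℝ} (hm : Measurable h) (hb : ∀ x, |h x| ≤ 1) (m : ℝ) (V : ℝ≥0) :
    Integrable (fun x => h x * gaussianPDFReal m V x) := by
  refine Integrable.mono (integrable_gaussianPDFReal m V)
    ((hm.mul (measurable_gaussianPDFReal m V)).aestronglyMeasurable)
    (ae_of_all _ fun x => ?_)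
  rw [Real.norm_eq_abs, Real.norm_eq_abs, abs_mul,
    abs_of_nonneg (gaussianPDFReal_nonneg m V x)]
  exact mul_le_of_le_one_left (gaussianPDFReal_nonneg m V x) (hb x)

lemma g1_abs (x : ℝ) : |Real.exp x / (1 + Real.exp x) - 1| ≤ 1 := by
  have hE := Real.exp_pos x
  have h0 : (0:ℝ) < 1 + Real.exp x := by linarith
  have h1 : Real.exp x / (1 + Real.exp x) ≤ 1 := by rw [div_le_one h0]; linarith
  have h2 : 0 ≤ Real.exp x / (1 + Real.exp x) := by positivity
  rw [abs_le]; constructor <;> linarith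

lemma g1sq_abs (x : ℝ) : |(Real.exp x / (1 + Real.exp x) - 1)^2| ≤ 1 := by
  rw [abs_pow]
  calc |Real.exp x / (1 + Real.exp x) - 1|^2 ≤ 1^2 := by
        apply pow_le_pow_left₀ (abs_nonneg _) (g1_abs x)
  _ = 1 := one_pow 2

lemma g2sq_abs (x : ℝ) : |(Real.exp x / (1 + Real.exp x))^2| ≤ 1 := by
  have hE := Real.exp_pos x
  have h0 : (0:ℝ) < 1 + Real.exp x := by linarith
  have h1 : Real.exp x / (1 + Real.exp x) ≤ 1 := by rw [div_le_one h0]; linarith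
  have h2 : 0 ≤ Real.exp x / (1 + Real.exp x) := by positivity
  rw [abs_pow, abs_of_nonneg h2]
  nlinarith

lemma g1_meas : Measurable (fun x : ℝ => (Real.exp x / (1 + Real.exp x) - 1)^2) := by
  have h : Continuous (fun x : ℝ => (Real.exp x / (1 + Real.exp x) - 1)^2) := by
    apply Continuous.pow
    exact (Real.continuous_exp.div (continuous_const.add Real.continuous_exp)
      (fun x => (add_pos one_pos (Real.exp_pos x)).ne')).sub continuous_const
  exact h.measurable

lemma g2_meas : Measurable (fun x : ℝ => (Real.exp x / (1 + Real.exp x))^2) := by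
  have h : Continuous (fun x : ℝ => (Real.exp x / (1 + Real.exp x))^2) := by
    apply Continuous.pow
    exact Real.continuous_exp.div (continuous_const.add Real.continuous_exp)
      (fun x => by positivity)
  exact h.measurable

lemma pointwise_id (t : ℝ) (ht : 0 < t) (x : ℝ) :
    (Real.exp x / (1 + Real.exp x) - 1)^2 * gaussianPDFReal (2*t) (Real.toNNReal (4*t)) x
    + (Real.exp x / (1 + Real.exp x))^2 * gaussianPDFReal (-(2*t)) (Real.toNNReal (4*t)) x
    = Real.exp (-(t/2)) / (2 * Real.cosh (x/2)) * gaussianPDFReal 0 (Real.toNNReal (4*t)) x := by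
  have h4t : (0:ℝ) < 4*t := by linarith
  have hVcoe : ((Real.toNNReal (4*t)) : ℝ) = 4*t := Real.coe_toNNReal _ h4t.le
  unfold gaussianPDFReal
  rw [hVcoe]
  have e1 : -(x - 2*t)^2 / (2*(4*t)) = x/2 + (-(t/2) + -(x - 0)^2/(2*(4*t))) := by
    field_simp; ring
  have e2 : -(x - -(2*t))^2 / (2*(4*t)) = -(x/2) + (-(t/2) + -(x - 0)^2/(2*(4*t))) := by
    field_simp; ring
  rw [e1, e2, Real.exp_add, Real.exp_add, Real.exp_add, Real.exp_add, Real.cosh_eq]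
  set E := Real.exp (-(x - 0)^2/(2*(4*t))) with hE
  set A := Real.exp (-(t/2)) with hA
  have hex : Real.exp x = Real.exp (x/2) * Real.exp (x/2) := by
    rw [← Real.exp_add]; congr 1; ring
  rw [hex, Real.exp_neg]
  set u := Real.exp (x/2) with hu
  have hupos : 0 < u := Real.exp_pos _
  have hEpos : 0 < E := Real.exp_pos _
  have hApos : 0 < A := Real.exp_pos _
  have h1u : (0:ℝ) < 1 + u * u := by positivity
  have hsq : (0:ℝ) < Real.sqrt (2*π*(4*t)) := Real.sqrt_pos.mpr (by positivity)
  field_simp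
  ring

lemma pdf_scale (t z : ℝ) (ht : 0 < t) :
    gaussianPDFReal 0 (Real.toNNReal (4*t)) (2 * Real.sqrt t * z)
      = (2 * Real.sqrt t)⁻¹ * gaussianPDFReal 0 1 z := by
  have h4t : (0:ℝ) < 4*t := by linarith
  have hVcoe : ((Real.toNNReal (4*t)) : ℝ) = 4*t := Real.coe_toNNReal _ h4t.le
  have hst : 0 < Real.sqrt t := Real.sqrt_pos.mpr ht
  have hsq : (Real.sqrt t)^2 = t := Real.sq_sqrt ht.le
  unfold gaussianPDFReal
  rw [hVcoe]
  have h1 : Real.sqrt (2*π*(4*t)) = 2 * Real.sqrt t * Real.sqrt (2*π) := by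
    rw [show 2*π*(4*t) = (2*Real.sqrt t)^2 * (2*π) by rw [mul_pow]; rw [hsq]; ring,
      Real.sqrt_mul (by positivity), Real.sqrt_sq (by positivity)]
  have h2 : -(2*Real.sqrt t*z - 0)^2/(2*(4*t)) = -(z - 0)^2/(2*(1:ℝ)) := by
    rw [show (2*Real.sqrt t*z - 0)^2 = 4 * ((Real.sqrt t)^2) * z^2 by ring, hsq]
    field_simp
    ring
  rw [h1, h2]
  have hs2 : (0:ℝ) < Real.sqrt (2*π) := Real.sqrt_pos.mpr (by positivity)
  push_cast
  rw [mul_inv]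
  ring_nf

lemma my_sub (f : ℝ → ℝ) (a : ℝ) (ha : 0 < a) : ∫ x, f x = a * ∫ z, f (a * z) := by
  rw [MeasureTheory.Measure.integral_comp_mul_left f a, abs_of_pos (inv_pos.mpr ha), smul_eq_mul,
    ← mul_assoc, mul_inv_cancel₀ (ne_of_gt ha), one_mul]

lemma hsub (t : ℝ) (ht : 0 < t) :
    ∫ x, Real.exp (-(t/2))/(2*Real.cosh (x/2)) * gaussianPDFReal 0 (Real.toNNReal (4*t)) x
      = 2 * Fint t := by
  have hst : 0 < Real.sqrt t := Real.sqrt_pos.mpr ht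
  rw [my_sub (fun x => Real.exp (-(t/2))/(2*Real.cosh (x/2))
    * gaussianPDFReal 0 (Real.toNNReal (4*t)) x) (2*Real.sqrt t) (by positivity)]
  have hpt : ∀ z : ℝ, Real.exp (-(t/2))/(2*Real.cosh (2*Real.sqrt t*z/2))
      * gaussianPDFReal 0 (Real.toNNReal (4*t)) (2*Real.sqrt t*z)
      = (Real.sqrt t)⁻¹ * psi t z := by
    intro z
    rw [pdf_scale t z ht, show 2*Real.sqrt t*z/2 = Real.sqrt t * z by ring]
    unfold psi
    have hc : 0 < Real.cosh (Real.sqrt t * z) := Real.cosh_pos _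
    field_simp
    ring
  have hI : ∫ (z:ℝ), Real.exp (-(t/2))/(2*Real.cosh (2*Real.sqrt t*z/2))
      * gaussianPDFReal 0 (Real.toNNReal (4*t)) (2*Real.sqrt t*z)
      = ∫ (z:ℝ), (Real.sqrt t)⁻¹ * psi t z := integral_congr_ae (ae_of_all _ hpt)
  rw [hI, integral_const_mul]
  show 2 * Real.sqrt t * ((Real.sqrt t)⁻¹ * ∫ z, psi t z) = 2 * Fint t
  rw [Fint]
  field_simp

lemma welfare_eq {σ r : ℝ} (hσ : 0 < σ) (hr : 0 < r) : welfare σ r = -Fint (r / σ^2) := by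
  have hσ2 : (0:ℝ) < σ^2 := by positivity
  have ht : 0 < r / σ^2 := div_pos hr hσ2
  set t := r / σ^2 with htdef
  have h2 : 2 * r / σ^2 = 2 * t := by rw [htdef]; ring
  have h4 : 4 * r / σ^2 = 4 * t := by rw [htdef]; ring
  have h4t : (0:ℝ) < 4 * t := by linarith
  have hVne : Real.toNNReal (4*t) ≠ 0 := by
    simp only [ne_eq, Real.toNNReal_eq_zero, not_le]; linarith
  unfold welfare
  rw [h2, h4]
  rw [integral_gaussianReal_eq _ hVne, integral_gaussianReal_eq _ hVne]
  have hint1 := integrable_bnd g1_meas g1sq_abs (2*t) (Real.toNNReal (4*t))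
  have hint2 := integrable_bnd g2_meas g2sq_abs (-(2*t)) (Real.toNNReal (4*t))
  have hadd := integral_add hint1 hint2
  have hcongr : ∫ x, ((Real.exp x / (1 + Real.exp x) - 1)^2
        * gaussianPDFReal (2*t) (Real.toNNReal (4*t)) x
      + (Real.exp x / (1 + Real.exp x))^2
        * gaussianPDFReal (-(2*t)) (Real.toNNReal (4*t)) x)
      = ∫ x, Real.exp (-(t/2)) / (2 * Real.cosh (x/2))
          * gaussianPDFReal 0 (Real.toNNReal (4*t)) x :=
    integral_congr_ae (ae_of_all _ (pointwise_id t ht))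
  rw [hcongr, hsub t ht] at hadd
  linarith [hadd]

lemma welfare_nonpos {σ r : ℝ} (hσ : 0 < σ) (hr : r ≤ 0) : welfare σ r ≤ -(1/4) := by
  have hσ2 : (0:ℝ) < σ^2 := by positivity
  have hm : 2 * r / σ^2 ≤ 0 := by
    apply div_nonpos_of_nonpos_of_nonneg (by linarith) hσ2.le
  have hV : Real.toNNReal (4 * r / σ^2) = 0 := by
    apply Real.toNNReal_of_nonpos
    apply div_nonpos_of_nonpos_of_nonneg (by linarith) hσ2.le
  unfold welfare
  rw [hV, gaussianReal_zero_var, gaussianReal_zero_var, integral_dirac, integral_dirac]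
  set m := 2 * r / σ^2 with hmdef
  have hE1 : Real.exp m ≤ 1 := Real.exp_le_one_iff.mpr hm
  have hEpos : 0 < Real.exp m := Real.exp_pos m
  rw [Real.exp_neg]
  set E := Real.exp m with hEdef
  have h0 : (0:ℝ) < 1 + E := by linarith
  have h1 : E/(1+E) - 1 = -(1/(1+E)) := by field_simp; ring
  have h2 : E⁻¹/(1+E⁻¹) = 1/(1+E) := by
    have hp : (0:ℝ) < 1 + E⁻¹ := by positivity
    field_simp
    ring
  have hX : (1:ℝ)/2 ≤ 1/(1+E) := by
    rw [div_le_div_iff₀ (by norm_num) h0]; linarith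
  rw [h1, h2]
  have hXnn : 0 ≤ 1/(1+E) := by positivity
  nlinarith


lemma exists_small {vbar : ℝ} (hv1 : -(1/4:ℝ) < vbar) (hv2 : vbar < 0) :
    ∃ t1 : ℝ, 0 < t1 ∧ -Fint t1 < vbar := by
  obtain ⟨δ, hδ⟩ : ∃ x : ℝ, x = vbar + 1/4 := ⟨_, rfl⟩
  have hδpos : 0 < δ := by rw [hδ]; linarith
  obtain ⟨t1, ht1d⟩ : ∃ x : ℝ, x = min δ 1 := ⟨_, rfl⟩
  have ht1pos : 0 < t1 := by rw [ht1d]; exact lt_min hδpos one_pos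
  have ht1le1 : t1 ≤ 1 := ht1d ▸ min_le_right _ _
  have ht1leδ : t1 ≤ δ := ht1d ▸ min_le_left _ _
  refine ⟨t1, ht1pos, ?_⟩
  have hlow := Fint_ge t1 ht1pos.le
  have hexp : 1 - t1/2 ≤ Real.exp (-(t1/2)) := by
    have := Real.add_one_le_exp (-(t1/2)); linarith
  have hsqrt : Real.sqrt (1 + t1) ≤ 1 + t1/2 := by
    rw [show (1:ℝ) + t1/2 = Real.sqrt ((1 + t1/2)^2) from (Real.sqrt_sq (by linarith)).symm]
    apply Real.sqrt_le_sqrt; nlinarith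
  have hden : 0 < 4 * Real.sqrt (1 + t1) := by
    have := Real.sqrt_pos.mpr (show (0:ℝ) < 1 + t1 by linarith); linarith
  have hstep : (1 - t1/2) / (4 * (1 + t1/2)) ≤ Real.exp (-(t1/2)) / (4 * Real.sqrt (1+t1)) :=
    div_le_div₀ (Real.exp_pos _).le hexp hden (by linarith)
  have hfinal : -vbar < (1 - t1/2) / (4 * (1 + t1/2)) := by
    rw [lt_div_iff₀ (by linarith : (0:ℝ) < 4 * (1 + t1/2))]
    have hv : -vbar = 1/4 - δ := by rw [hδ]; ring
    rw [hv]
    nlinarith [mul_pos hδpos ht1pos]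
  linarith [hlow, hstep, hfinal]

end SLAux

open MeasureTheory ProbabilityTheory

set_option maxHeartbeats 1000000 in
/-- Let `M` and `M′` be networks whose signal counts satisfy
`lim r_i/i > lim r′_i/i > 0`. Then for every utility threshold `v̄ ∈ (−1/4, 0)`
there is `π > 0` such that whenever the private signal precision satisfies
`0 < 1/σ² ≤ π`: social learning strongly attains `v̄` by some agent `I` in `M`,
weakly attains `v̄` by some agent `i′` in `M′`, and `I < i′`. -/
theorem strong_attainment_before_weak
    (Net Net' : ℕ → Finset ℕ)
    (hNet : ∀ i, ∀ j ∈ Net i, 1 ≤ j ∧ j < i)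
    (hNet' : ∀ i, ∀ j ∈ Net' i, 1 ≤ j ∧ j < i)
    (L L' : ℝ)
    (hL : Tendsto (fun i : ℕ => rcount Net i / (i : ℝ)) atTop (nhds L))
    (hL' : Tendsto (fun i : ℕ => rcount Net' i / (i : ℝ)) atTop (nhds L'))
    (hrank : L' < L) (hpos : 0 < L')
    (vbar : ℝ) (hv1 : -(1 / 4) < vbar) (hv2 : vbar < 0) :
    ∃ pi0 : ℝ, 0 < pi0 ∧ ∀ σ : ℝ, 0 < σ → 1 / σ ^ 2 ≤ pi0 →
      ∃ I i' : ℕ,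
        IsLeast {I : ℕ | ∀ i : ℕ, I ≤ i → vbar ≤ welfare σ (rcount Net i)} I ∧
        IsLeast {i : ℕ | vbar ≤ welfare σ (rcount Net' i)} i' ∧
        I < i' := by
  classical
  obtain ⟨t1, ht1pos, ht1⟩ := SLAux.exists_small hv1 hv2
  set S := {t : ℝ | 0 ≤ t ∧ -SLAux.Fint t < vbar} with hSdef
  have ht1S : t1 ∈ S := ⟨ht1pos.le, ht1⟩
  have hSne : S.Nonempty := ⟨t1, ht1S⟩
  have hSbdd : BddAbove S := by
    refine ⟨-2 * Real.log (-(4*vbar)), fun t htS => ?_⟩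
    obtain ⟨htnn, htlt⟩ := htS
    have h1 : -(4*vbar) < Real.exp (-(t/2)) := by
      have := SLAux.Fint_le t
      linarith
    have h2 : Real.log (-(4*vbar)) < -(t/2) := by
      have := Real.log_lt_log (by linarith) h1
      rwa [Real.log_exp] at this
    linarith
  set tstar := sSup S with htstar
  have ht1star : t1 ≤ tstar := le_csSup hSbdd ht1S
  have htstarpos : 0 < tstar := lt_of_lt_of_le ht1pos ht1star
  have Wlt : ∀ σ r : ℝ, 0 < σ → r / σ^2 < tstar → welfare σ r < vbar := by
    intro σ r hσ h
    rcases le_or_gt r 0 with hr | hr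
    · have := SLAux.welfare_nonpos hσ hr; linarith
    · rw [SLAux.welfare_eq hσ hr]
      obtain ⟨t', ht'S, htt'⟩ := exists_lt_of_lt_csSup hSne h
      obtain ⟨ht'nn, ht'lt⟩ := ht'S
      have hmono := SLAux.Fint_anti (div_nonneg hr.le (by positivity : (0:ℝ) ≤ σ^2)) htt'.le
      linarith
  have Wge : ∀ σ r : ℝ, 0 < σ → tstar < r / σ^2 → vbar ≤ welfare σ r := by
    intro σ r hσ h
    have hσ2 : (0:ℝ) < σ^2 := by positivity
    have hr : 0 < r := by
      by_contra hc
      push_neg at hc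
      have : r / σ^2 ≤ 0 := div_nonpos_of_nonpos_of_nonneg hc hσ2.le
      linarith
    rw [SLAux.welfare_eq hσ hr]
    by_contra hc
    push_neg at hc
    have hmem : r / σ^2 ∈ S := ⟨by positivity, hc⟩
    have := le_csSup hSbdd hmem
    linarith
  clear ht1 ht1S hSne hSbdd htstar ht1star
  obtain ⟨ε, hε⟩ : ∃ x : ℝ, x = (L - L')/4 := ⟨_, rfl⟩
  have hεpos : 0 < ε := by rw [hε]; linarith
  obtain ⟨A, hA⟩ : ∃ x : ℝ, x = L - ε := ⟨_, rfl⟩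
  obtain ⟨B, hB⟩ : ∃ x : ℝ, x = L' + ε := ⟨_, rfl⟩
  have hApos : 0 < A := by rw [hA, hε]; linarith
  have hBpos : 0 < B := by rw [hB]; linarith
  have hBA : B < A := by rw [hA, hB, hε]; linarith
  obtain ⟨N0, hN0⟩ := eventually_atTop.mp
    (hL.eventually (eventually_gt_nhds (show A < L by rw [hA]; linarith)))
  obtain ⟨N, hNdef⟩ : ∃ n : ℕ, n = max N0 1 := ⟨_, rfl⟩
  have hNge : ∀ i : ℕ, N ≤ i → A < rcount Net i / i :=
    fun i hi => hN0 i (le_trans (le_trans (le_max_left _ _) hNdef.ge) hi)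
  have hN1 : 1 ≤ N := hNdef ▸ le_max_right _ _
  obtain ⟨N0', hN0'⟩ := eventually_atTop.mp
    ((hL'.eventually (eventually_lt_nhds (show L' < B by rw [hB]; linarith))).and
      (hL'.eventually (eventually_gt_nhds (show L'/2 < L' by linarith))))
  obtain ⟨N', hN'def⟩ : ∃ n : ℕ, n = max N0' 1 := ⟨_, rfl⟩
  have hN'ge : ∀ i : ℕ, N' ≤ i → rcount Net' i / i < B ∧ L'/2 < rcount Net' i / i :=
    fun i hi => hN0' i (le_trans (le_trans (le_max_left _ _) hN'def.ge) hi)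
  have hN'1 : 1 ≤ N' := hN'def ▸ le_max_right _ _
  obtain ⟨C, hCdef⟩ : ∃ x : ℝ, x = ∑ i ∈ Finset.range N', |rcount Net' i| := ⟨_, rfl⟩
  have hCb : ∀ i : ℕ, i < N' → rcount Net' i ≤ C := by
    intro i hi
    rw [hCdef]
    refine le_trans (le_abs_self _) ?_
    exact Finset.single_le_sum (f := fun j => |rcount Net' j|)
      (fun j _ => abs_nonneg _) (Finset.mem_range.mpr hi)
  have hC0 : 0 ≤ C := hCdef ▸ Finset.sum_nonneg fun j _ => abs_nonneg _
  have hABpos : 0 < A - B := by linarith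
  obtain ⟨D, hDdef⟩ : ∃ x : ℝ, x = max (C + 1) (B * ((N:ℝ) + 2) * A / (A - B) + 1) := ⟨_, rfl⟩
  have hDpos : 0 < D := by
    rw [hDdef]
    exact lt_of_lt_of_le (by positivity) (le_max_right _ _)
  have hDC : C + 1 ≤ D := hDdef ▸ le_max_left _ _
  have hDB : B * ((N:ℝ) + 2) * A / (A - B) + 1 ≤ D := hDdef ▸ le_max_right _ _
  refine ⟨tstar / D, by positivity, ?_⟩
  intro σ hσ hσle
  have hσ2 : (0:ℝ) < σ^2 := by positivity
  obtain ⟨R, hR⟩ : ∃ x : ℝ, x = tstar * σ^2 := ⟨_, rfl⟩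
  have hRpos : 0 < R := by rw [hR]; positivity
  have hDR : D ≤ R := by
    rw [div_le_div_iff₀ hσ2 hDpos] at hσle
    rw [hR]; linarith
  have Wge' : ∀ r : ℝ, R < r → vbar ≤ welfare σ r := by
    intro r h
    rw [hR] at h
    exact Wge σ r hσ ((lt_div_iff₀ hσ2).mpr (by linarith))
  have Wlt' : ∀ r : ℝ, r < R → welfare σ r < vbar := by
    intro r h
    rw [hR] at h
    exact Wlt σ r hσ ((div_lt_iff₀ hσ2).mpr (by linarith))
  obtain ⟨I0, hI0def⟩ : ∃ n : ℕ, n = N + Nat.ceil (R / A) + 1 := ⟨_, rfl⟩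
  have hI0r : ∀ i : ℕ, I0 ≤ i → R < rcount Net i := by
    intro i hi
    have hiN : N ≤ i := by omega
    have hipos : 0 < i := by omega
    have hipos' : (0:ℝ) < i := by exact_mod_cast hipos
    have h := hNge i hiN
    have h1 : A * i < rcount Net i := by
      rw [lt_div_iff₀ hipos'] at h; linarith
    have h2 : R / A + 1 ≤ (I0 : ℝ) := by
      rw [hI0def]; push_cast
      have hceil := Nat.le_ceil (R / A)
      have hNn : (0:ℝ) ≤ (N:ℝ) := Nat.cast_nonneg N
      linarith
    have h3 : (I0:ℝ) ≤ i := by exact_mod_cast hi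
    have h4 : A * (R/A + 1) ≤ A * i := mul_le_mul_of_nonneg_left (by linarith) hApos.le
    have h5 : A * (R/A) = R := by field_simp
    have h6 : A * (R/A + 1) = A * (R/A) + A := by ring
    linarith
  have hI0r' : ∀ i : ℕ, i ≤ I0 → rcount Net' i < R := by
    intro i hi
    rcases lt_or_ge i N' with hcase | hcase
    · have := hCb i hcase
      linarith
    · have hipos : 0 < i := by omega
      have hipos' : (0:ℝ) < i := by exact_mod_cast hipos
      have hlt := (hN'ge i hcase).1
      have h5 : rcount Net' i < B * i := by rw [div_lt_iff₀ hipos'] at hlt; linarith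
      have h6 : (i:ℝ) ≤ (I0:ℝ) := by exact_mod_cast hi
      have h7 : (I0 : ℝ) ≤ (N:ℝ) + (R/A + 1) + 1 := by
        have hceil := Nat.ceil_lt_add_one (show (0:ℝ) ≤ R/A by positivity)
        rw [hI0def]
        push_cast
        linarith
      have h9 : B * ((N:ℝ)+2) * A / (A-B) < R := by linarith
      have h10 : B * ((N:ℝ)+2) * A < R * (A-B) := (div_lt_iff₀ hABpos).mp h9
      have h11 : B * ((N:ℝ) + R/A + 2) < R := by
        have e : B * ((N:ℝ) + R/A + 2) = (B * ((N:ℝ)+2) * A + B * R)/A := by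
          field_simp; ring
        rw [e, div_lt_iff₀ hApos]
        nlinarith
      calc rcount Net' i < B * i := h5
        _ ≤ B * (I0:ℝ) := mul_le_mul_of_nonneg_left h6 hBpos.le
        _ ≤ B * ((N:ℝ) + R/A + 2) := mul_le_mul_of_nonneg_left (by linarith) hBpos.le
        _ < R := h11
  have hI0mem : I0 ∈ {I : ℕ | ∀ i : ℕ, I ≤ i → vbar ≤ welfare σ (rcount Net i)} :=
    fun i hi => Wge' _ (hI0r i hi)
  obtain ⟨j, hjdef⟩ : ∃ n : ℕ, n = max N' (Nat.ceil (2 * R / L') + 1) := ⟨_, rfl⟩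
  have hjN' : N' ≤ j := hjdef ▸ le_max_left _ _
  have hjmem : j ∈ {i : ℕ | vbar ≤ welfare σ (rcount Net' i)} := by
    have hjpos : 0 < j := lt_of_lt_of_le Nat.zero_lt_one (hN'1.trans hjN')
    have hjpos' : (0:ℝ) < j := by exact_mod_cast hjpos
    have h := (hN'ge j hjN').2
    have h1 : L'/2 * j < rcount Net' j := by rw [lt_div_iff₀ hjpos'] at h; linarith
    have h2 : 2*R/L' + 1 ≤ (j:ℝ) := by
      have hceil := Nat.le_ceil (2*R/L')
      have hle : (Nat.ceil (2*R/L') + 1 : ℕ) ≤ j := hjdef ▸ le_max_right _ _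
      have hle' := (Nat.cast_le (α := ℝ)).mpr hle
      push_cast at hle'
      linarith
    have h3 : L'/2 * (2*R/L') = R := by field_simp
    refine Wge' _ ?_
    nlinarith [mul_le_mul_of_nonneg_left h2 (show (0:ℝ) ≤ L'/2 by linarith)]
  refine ⟨sInf {I : ℕ | ∀ i : ℕ, I ≤ i → vbar ≤ welfare σ (rcount Net i)},
    sInf {i : ℕ | vbar ≤ welfare σ (rcount Net' i)},
    ⟨Nat.sInf_mem ⟨I0, hI0mem⟩, fun b hb => Nat.sInf_le hb⟩,
    ⟨Nat.sInf_mem ⟨j, hjmem⟩, fun b hb => Nat.sInf_le hb⟩, ?_⟩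
  have hIle : sInf {I : ℕ | ∀ i : ℕ, I ≤ i → vbar ≤ welfare σ (rcount Net i)} ≤ I0 :=
    Nat.sInf_le hI0mem
  have hi'mem := Nat.sInf_mem (⟨j, hjmem⟩ :
    Set.Nonempty {i : ℕ | vbar ≤ welfare σ (rcount Net' i)})
  have hi'gt : I0 < sInf {i : ℕ | vbar ≤ welfare σ (rcount Net' i)} := by
    by_contra hc
    push_neg at hc
    have hw := Wlt' _ (hI0r' _ hc)
    simp only [Set.mem_setOf_eq] at hi'mem
    linarith
  exact lt_of_le_of_lt hIle hi'gt
end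

section
/- Let M and M′ be networks whose signal counts r_i and r′_i (from the equilibrium weight recursion) satisfy r_i → ∞ and r′_i → ∞ and have strictly ranked aggregative efficiency lim_{i→∞}(r_i/i) > lim_{i→∞}(r′_i/i), both limits existing. Fix σ > 0 and set v_i := v_σ(r_i) and v′_i := v_σ(r′_i). Then there exists T̄ ∈ ℕ such that for every T ≥ T̄ and every T-patient social welfare function — i.e. every summable sequence of nonnegative weights (γ_i)_{i≥1} together with γ_∞ ≥ 0 satisfying γ_i = 0 for all i < T and γ_i > 0 for all i ≥ T — the welfare of M strictly exceeds that of M′: Σ_{i=1}^∞ γ_i v_i + γ_∞ · lim_{i→∞} v_i > Σ_{i=1}^∞ γ_i v′_i + γ_∞ · lim_{i→∞} v′_i. -/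
open Matrix Finset Filter

open MeasureTheory ProbabilityTheory Real

open MeasureTheory ProbabilityTheory

open Topology Set
open scoped ENNReal NNReal

namespace SL


noncomputable def c0 : ℝ := (Real.sqrt (2 * π * 2))⁻¹

lemma c0_pos : 0 < c0 := by
  rw [c0]
  positivity

noncomputable def g0 (z : ℝ) : ℝ := c0 * rexp (-(z ^ 2) / 4)

lemma g0_eq : gaussianPDFReal 0 2 = g0 := by
  ext z
  simp only [gaussianPDFReal, g0, c0, NNReal.coe_ofNat, sub_zero]
  norm_num

lemma g0_pos (z : ℝ) : 0 < g0 z := by rw [g0, c0]; positivity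

lemma g0_cont : Continuous g0 := by
  unfold g0
  fun_prop

lemma g0_even (z : ℝ) : g0 (-z) = g0 z := by simp [g0]

lemma g0_shift (a z : ℝ) : g0 (z + 2 * a) = rexp (-(a * z + a ^ 2)) * g0 z := by
  rw [g0, g0, show rexp (-(a * z + a ^ 2)) * (c0 * rexp (-(z ^ 2) / 4))
      = c0 * rexp (-(a * z + a ^ 2) + -(z ^ 2) / 4) by rw [Real.exp_add]; ring]
  congr 1
  ring

lemma g0_hasDeriv (z : ℝ) : HasDerivAt g0 (-(z / 2) * g0 z) z := by
  have h1 : HasDerivAt (fun z : ℝ => -(z ^ 2) / 4) (-(z / 2)) z := by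
    have := ((hasDerivAt_pow 2 z).neg).div_const 4
    refine this.congr_deriv ?_
    norm_num
    ring
  have := (h1.exp).const_mul c0
  refine this.congr_deriv ?_
  rw [g0]
  ring

lemma g0_tendsto_top : Tendsto g0 atTop (𝓝 0) := by
  have h2 : Tendsto (fun z : ℝ => -(z ^ 2) / 4) atTop atBot := by
    apply Tendsto.atBot_div_const (by norm_num)
    exact tendsto_neg_atTop_atBot.comp (tendsto_pow_atTop two_ne_zero)
  have := (Real.tendsto_exp_atBot.comp h2).const_mul c0
  rw [mul_zero] at this
  exact this

lemma g0_tendsto_bot : Tendsto g0 atBot (𝓝 0) := by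
  have := g0_tendsto_top.comp (tendsto_neg_atBot_atTop : Tendsto (fun z : ℝ => -z) atBot atTop)
  refine this.congr fun z => ?_
  simp [Function.comp, g0_even]


/-- `S x = (1+eˣ)⁻²`, the squared error integrand. -/
noncomputable def S (x : ℝ) : ℝ := ((1 + rexp x) ^ 2)⁻¹

noncomputable def q (x : ℝ) : ℝ := -2 * rexp x / (1 + rexp x) ^ 3

noncomputable def qd (x : ℝ) : ℝ := -2 * (rexp x * (1 - 2 * rexp x)) / (1 + rexp x) ^ 4

lemma one_add_exp_pos (x : ℝ) : 0 < 1 + rexp x := by positivity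

lemma one_add_exp_ne (x : ℝ) : (1 + rexp x) ≠ 0 := (one_add_exp_pos x).ne'

lemma S_cont : Continuous S := by
  unfold S
  fun_prop (disch := intro x; positivity)

lemma q_cont : Continuous q := by
  unfold q
  fun_prop (disch := intro x; positivity)

lemma qd_cont : Continuous qd := by
  unfold qd
  fun_prop (disch := intro x; positivity)

lemma S_hasDeriv (x : ℝ) : HasDerivAt S (q x) x := by
  have h1 : HasDerivAt (fun x : ℝ => 1 + rexp x) (rexp x) x := by
    simpa using (Real.hasDerivAt_exp x).const_add 1
  have h2 := (h1.pow 2).inv (pow_ne_zero _ (one_add_exp_ne x))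
  refine h2.congr_deriv ?_
  simp only [Pi.pow_apply]
  rw [q]
  field_simp
  ring

lemma q_hasDeriv (x : ℝ) : HasDerivAt q (qd x) x := by
  have h1 : HasDerivAt (fun x : ℝ => 1 + rexp x) (rexp x) x := by
    simpa using (Real.hasDerivAt_exp x).const_add 1
  have hn : HasDerivAt (fun x : ℝ => -2 * rexp x) (-2 * rexp x) x :=
    (Real.hasDerivAt_exp x).const_mul (-2)
  have h2 := hn.div (h1.pow 3) (pow_ne_zero _ (one_add_exp_ne x))
  refine h2.congr_deriv ?_
  simp only [Pi.pow_apply]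
  rw [qd]
  rw [div_eq_div_iff (by positivity) (by positivity)]
  ring

lemma q_bound (x : ℝ) : |q x| ≤ 1 / 2 := by
  have he := Real.exp_pos x
  have h3 : (0:ℝ) < (1 + rexp x) ^ 3 := by positivity
  have : q x = -(2 * rexp x / (1 + rexp x) ^ 3) := by rw [q]; ring
  rw [this, abs_neg, abs_of_nonneg (by positivity)]
  rw [div_le_iff₀ h3]
  nlinarith [sq_nonneg (1 - rexp x), sq_nonneg (1 + rexp x)]

lemma qd_bound (x : ℝ) : |qd x| ≤ 6 := by
  have he := Real.exp_pos x
  have h4 : (0:ℝ) < (1 + rexp x) ^ 4 := by positivity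
  rw [qd, abs_div, abs_of_pos h4, div_le_iff₀ h4]
  have h1 : |(-2 : ℝ) * (rexp x * (1 - 2 * rexp x))| = 2 * |rexp x * (1 - 2 * rexp x)| := by
    rw [abs_mul]
    norm_num
  rw [h1]
  have h2 : |rexp x * (1 - 2 * rexp x)| ≤ rexp x + 2 * rexp x ^ 2 := by
    rw [abs_mul, abs_of_pos he]
    have : |1 - 2 * rexp x| ≤ 1 + 2 * rexp x := by
      rw [abs_le]; constructor <;> nlinarith
    nlinarith
  nlinarith [sq_nonneg (rexp x), sq_nonneg (1 + rexp x), pow_pos (one_add_exp_pos x) 2,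
    sq_nonneg ((1 + rexp x) ^ 2 - 1)]

lemma S_le_one (x : ℝ) : S x ≤ 1 := by
  rw [S]
  rw [inv_le_one_iff₀]
  right
  nlinarith [Real.exp_pos x]

lemma S_nonneg (x : ℝ) : 0 ≤ S x := by rw [S]; positivity

/-- the key reflection algebra: `(q+qd)(x) + (q+qd)(-x)·e⁻ˣ = -2eˣ/(1+eˣ)³`. -/
lemma key_alg (x : ℝ) :
    (q x + qd x) + (q (-x) + qd (-x)) * rexp (-x) = -2 * rexp x / (1 + rexp x) ^ 3 := by
  have he := Real.exp_pos x
  have hne := one_add_exp_ne x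
  have hne' : (1 + rexp (-x)) ≠ 0 := one_add_exp_ne (-x)
  rw [q, q, qd, qd, Real.exp_neg]
  have hx : rexp x ≠ 0 := he.ne'
  field_simp
  ring

/-- first welfare integrand equals `S`. -/
lemma integrand_one (x : ℝ) : (rexp x / (1 + rexp x) - 1) ^ 2 = S x := by
  have hne := one_add_exp_ne x
  rw [S]
  field_simp
  ring

/-- second welfare integrand composed with negation equals `S`. -/
lemma integrand_two (x : ℝ) : (rexp (-x) / (1 + rexp (-x))) ^ 2 = S x := by
  have hne := one_add_exp_ne x
  have hne' : (1 + rexp (-x)) ≠ 0 := one_add_exp_ne (-x)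
  rw [S, Real.exp_neg]
  have hx : rexp x ≠ 0 := (Real.exp_pos x).ne'
  field_simp
  ring

lemma S_comp_hasDeriv (z a : ℝ) :
    HasDerivAt (fun a : ℝ => S (a * z + a ^ 2)) (q (a * z + a ^ 2) * (z + 2 * a)) a := by
  have hin : HasDerivAt (fun a : ℝ => a * z + a ^ 2) (z + 2 * a) a := by
    have h1 : HasDerivAt (fun a : ℝ => a * z) z a := hasDerivAt_mul_const z
    have h2 := hasDerivAt_pow 2 a
    refine (h1.add h2).congr_deriv ?_
    simp
  exact (S_hasDeriv _).comp a hin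

lemma P_hasDeriv (a z : ℝ) :
    HasDerivAt (fun z => q (a * z + a ^ 2) * g0 z)
      (qd (a * z + a ^ 2) * a * g0 z + q (a * z + a ^ 2) * (-(z / 2) * g0 z)) z := by
  have hin : HasDerivAt (fun z : ℝ => a * z + a ^ 2) a z := by
    simpa using ((hasDerivAt_id z).const_mul a).add_const (a ^ 2)
  exact ((q_hasDeriv _).comp z hin).mul (g0_hasDeriv z)


lemma q_neg (x : ℝ) : q x < 0 := by
  rw [q]
  apply div_neg_of_neg_of_pos
  · nlinarith [Real.exp_pos x]
  · positivity

lemma key_alg' (x : ℝ) : -2 * rexp x / (1 + rexp x) ^ 3 = q x := rfl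




/-- The standard auxiliary measure `ν = N(0,2)`. -/
noncomputable def nu : Measure ℝ := gaussianReal 0 2

instance : IsProbabilityMeasure nu := by unfold nu; infer_instance

lemma nu_eq : nu = volume.withDensity fun z =>
    (Real.toNNReal (gaussianPDFReal 0 2 z) : ℝ≥0∞) := by
  rw [nu, gaussianReal_of_var_ne_zero _ (by norm_num : (2 : ℝ≥0) ≠ 0)]
  rfl

lemma integral_nu (f : ℝ → ℝ) :
    ∫ z, f z ∂nu = ∫ z, f z * g0 z := by
  rw [nu_eq, integral_withDensity_eq_integral_smul
    ((measurable_gaussianPDFReal 0 2).real_toNNReal)]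
  congr 1
  ext z
  rw [NNReal.smul_def, Real.coe_toNNReal _ (gaussianPDFReal_nonneg 0 2 z), g0_eq]
  exact (smul_eq_mul _ _).trans (mul_comm _ _)

lemma integrable_nu_iff (f : ℝ → ℝ) :
    Integrable f nu ↔ Integrable (fun z => f z * g0 z) volume := by
  rw [nu_eq, integrable_withDensity_iff_integrable_smul
    ((measurable_gaussianPDFReal 0 2).real_toNNReal)]
  have hpt : ∀ z, (gaussianPDFReal 0 2 z).toNNReal • f z = f z * g0 z := fun z => by
    rw [NNReal.smul_def, Real.coe_toNNReal _ (gaussianPDFReal_nonneg 0 2 z), g0_eq]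
    exact (smul_eq_mul _ _).trans (mul_comm _ _)
  constructor <;> intro h <;> refine h.congr (ae_of_all _ fun z => ?_)
  · exact hpt z
  · exact (hpt z).symm

/-- bounded continuous functions are `ν`-integrable. -/
lemma integrable_nu_of_bd (f : ℝ → ℝ) (C : ℝ) (hf : Continuous f) (hC : ∀ x, |f x| ≤ C) :
    Integrable f nu :=
  Integrable.mono' (integrable_const C) hf.aestronglyMeasurable (ae_of_all _ hC)

/-- bounded continuous multiples of the Gaussian density are integrable. -/
lemma integrable_bd_g0 (f : ℝ → ℝ) (C : ℝ) (hf : Continuous f) (hC : ∀ x, |f x| ≤ C) :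
    Integrable (fun z => f z * g0 z) volume := by
  rw [← integrable_nu_iff]
  exact integrable_nu_of_bd f C hf hC

lemma integrable_abs_g0 : Integrable (fun z => |z| * g0 z) volume := by
  have h0 : Integrable (fun z : ℝ => |z * rexp (-(4 : ℝ)⁻¹ * z ^ 2)|) volume :=
    (integrable_mul_exp_neg_mul_sq (by norm_num : (0:ℝ) < 4⁻¹)).abs
  have h1 : Integrable (fun z : ℝ => c0 * |z * rexp (-(4 : ℝ)⁻¹ * z ^ 2)|) :=
    h0.const_mul _
  refine h1.congr (ae_of_all _ fun z => ?_)
  simp only [g0]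
  rw [abs_mul, abs_of_pos (Real.exp_pos _),
    show -(4 : ℝ)⁻¹ * z ^ 2 = -(z ^ 2) / 4 by ring]
  ring

lemma integrable_id_nu : Integrable (fun z : ℝ => |z|) nu := by
  rw [integrable_nu_iff]
  exact integrable_abs_g0



lemma integrable_bd_zg0 (f : ℝ → ℝ) (C : ℝ) (hf : Continuous f) (hC : ∀ x, |f x| ≤ C) :
    Integrable (fun z => f z * (z * g0 z)) volume := by
  refine Integrable.mono' (integrable_abs_g0.const_mul C) ?_ (ae_of_all _ fun z => ?_)
  · exact (hf.mul (continuous_id.mul g0_cont)).aestronglyMeasurable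
  · rw [norm_eq_abs, abs_mul, abs_mul, abs_of_pos (g0_pos z)]
    exact mul_le_mul_of_nonneg_right (hC z)
      (mul_nonneg (abs_nonneg z) (g0_pos z).le)

noncomputable def Phi (a : ℝ) : ℝ := ∫ z, S (a * z + a ^ 2) ∂nu

noncomputable def Phi' (a : ℝ) : ℝ := ∫ z, q (a * z + a ^ 2) * (z + 2 * a) ∂nu

lemma q_comp_bd (a C : ℝ) (hC : |a| ≤ C) (z : ℝ) : |q (a * z + a ^ 2) * (z + 2 * a)| ≤
    1 / 2 * |z| + C := by
  rw [abs_mul]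
  have h1 := q_bound (a * z + a ^ 2)
  have h2 : |z + 2 * a| ≤ |z| + 2 * |a| := by
    calc |z + 2 * a| ≤ |z| + |2 * a| := abs_add_le _ _
      _ = |z| + 2 * |a| := by rw [abs_mul]; norm_num
  have h3 : (0:ℝ) ≤ |z + 2 * a| := abs_nonneg _
  nlinarith [abs_nonneg (q (a * z + a ^ 2)), abs_nonneg z]

lemma Phi_hasDeriv (a₀ : ℝ) : HasDerivAt Phi (Phi' a₀) a₀ := by
  have key := hasDerivAt_integral_of_dominated_loc_of_deriv_le
    (F := fun a z => S (a * z + a ^ 2))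
    (F' := fun a z => q (a * z + a ^ 2) * (z + 2 * a))
    (x₀ := a₀) (s := Metric.ball a₀ 1) (bound := fun z => 1 / 2 * |z| + (|a₀| + 1)) (μ := nu)
    (Metric.ball_mem_nhds a₀ one_pos)
    (Eventually.of_forall fun a =>
      ((S_cont.comp (by fun_prop : Continuous fun z : ℝ => a * z + a ^ 2)).aestronglyMeasurable))
    (integrable_nu_of_bd _ 1 (S_cont.comp (by fun_prop)) fun z => by
      rw [abs_of_nonneg (S_nonneg _)]; exact S_le_one _)
    ((q_cont.comp (by fun_prop : Continuous fun z : ℝ => a₀ * z + a₀ ^ 2)).mul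
      (by fun_prop : Continuous fun z : ℝ => z + 2 * a₀)).aestronglyMeasurable
    (ae_of_all _ fun z a ha => by
      have : |a| ≤ |a₀| + 1 := by
        have := mem_ball_iff_norm.mp ha
        calc |a| = |a₀ + (a - a₀)| := by ring_nf
          _ ≤ |a₀| + |a - a₀| := abs_add_le _ _
          _ ≤ |a₀| + 1 := by
              have : |a - a₀| ≤ 1 := le_of_lt (by simpa [norm_eq_abs] using this)
              linarith
      rw [norm_eq_abs]
      exact q_comp_bd a (|a₀| + 1) this z)
    ((integrable_id_nu.const_mul (1 / 2)).add (integrable_const (|a₀| + 1)))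
    (ae_of_all _ fun z a _ => S_comp_hasDeriv z a)
  exact key.2

/-- Integration by parts: `∫ q(az+a²) z dν = 2a ∫ qd(az+a²) dν`. -/
lemma stein (a : ℝ) :
    ∫ z, (q (a * z + a ^ 2) * z) * g0 z = 2 * a * ∫ z, qd (a * z + a ^ 2) * g0 z := by
  set P : ℝ → ℝ := fun z => q (a * z + a ^ 2) * g0 z with hP
  set P' : ℝ → ℝ := fun z =>
    qd (a * z + a ^ 2) * a * g0 z + q (a * z + a ^ 2) * (-(z / 2) * g0 z) with hP'
  have hcont_in : Continuous fun z : ℝ => a * z + a ^ 2 := by fun_prop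
  have hint1 : Integrable (fun z => (qd (a * z + a ^ 2) * a) * g0 z) volume :=
    integrable_bd_g0 _ (6 * |a|) ((qd_cont.comp hcont_in).mul continuous_const)
      (fun z => by
        rw [abs_mul]
        exact mul_le_mul_of_nonneg_right (qd_bound _) (abs_nonneg a) |>.trans
          (le_of_eq (by ring)))
  have hint2 : Integrable (fun z => (-(1 / 2) * q (a * z + a ^ 2)) * (z * g0 z)) volume :=
    integrable_bd_zg0 _ (1 / 2 * (1 / 2)) (continuous_const.mul (q_cont.comp hcont_in))
      (fun z => by
        rw [abs_mul]
        have h2 : |(-(1/2) : ℝ)| = 1/2 := by norm_num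
        calc |(-(1/2) : ℝ)| * |q (a * z + a ^ 2)| ≤ 1/2 * (1/2) := by
              rw [h2]
              exact mul_le_mul_of_nonneg_left (q_bound _) (by norm_num))
  have hintP' : Integrable P' volume := by
    refine (hint1.add hint2).congr (ae_of_all _ fun z => ?_)
    simp only [hP', Pi.add_apply]
    ring
  have hPbd : ∀ z, ‖P z‖ ≤ 1 / 2 * g0 z := by
    intro z
    rw [norm_eq_abs]
    show |q (a * z + a ^ 2) * g0 z| ≤ _
    rw [abs_mul, abs_of_pos (g0_pos z)]
    exact mul_le_mul_of_nonneg_right (q_bound _) (g0_pos z).le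
  have h12top : Tendsto (fun z => 1 / 2 * g0 z) atTop (𝓝 0) := by
    have := g0_tendsto_top.const_mul (1 / 2)
    rwa [mul_zero] at this
  have h12bot : Tendsto (fun z => 1 / 2 * g0 z) atBot (𝓝 0) := by
    have := g0_tendsto_bot.const_mul (1 / 2)
    rwa [mul_zero] at this
  have htop : Tendsto P atTop (𝓝 0) := squeeze_zero_norm hPbd h12top
  have hbot : Tendsto P atBot (𝓝 0) := squeeze_zero_norm hPbd h12bot
  have hIoi : ∫ z in Ioi (0:ℝ), P' z = 0 - P 0 :=
    integral_Ioi_of_hasDerivAt_of_tendsto' (fun z _ => P_hasDeriv a z)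
      hintP'.integrableOn htop
  have hIic : ∫ z in Iic (0:ℝ), P' z = P 0 - 0 :=
    integral_Iic_of_hasDerivAt_of_tendsto' (fun z _ => P_hasDeriv a z)
      hintP'.integrableOn hbot
  have hsplit : (∫ z in Iic (0:ℝ), P' z) + ∫ z in Ioi (0:ℝ), P' z = ∫ z, P' z := by
    rw [← compl_Iic]
    exact integral_add_compl measurableSet_Iic hintP'
  have hzero : ∫ z, P' z = 0 := by rw [← hsplit, hIoi, hIic]; ring
  -- now rearrange
  have hsum : (∫ z, (qd (a * z + a ^ 2) * a) * g0 z)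
      + ∫ z, (-(1 / 2) * q (a * z + a ^ 2)) * (z * g0 z) = 0 := by
    rw [← integral_add hint1 hint2, ← hzero]
    congr 1
    ext z
    simp only [hP']
    ring
  have e1 : ∫ z, (qd (a * z + a ^ 2) * a) * g0 z = a * ∫ z, qd (a * z + a ^ 2) * g0 z := by
    rw [← integral_const_mul]
    congr 1; ext z; ring
  have e2 : ∫ z, (-(1 / 2) * q (a * z + a ^ 2)) * (z * g0 z)
      = -(1 / 2) * ∫ z, (q (a * z + a ^ 2) * z) * g0 z := by
    rw [← integral_const_mul]
    congr 1; ext z; ring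
  rw [e1, e2] at hsum
  linarith

/-- Reflection identity. -/
lemma reflection (a : ℝ) :
    ∫ z, (q (a * z + a ^ 2) + qd (a * z + a ^ 2)) * g0 z
      = ∫ z, (-qd (a * z + a ^ 2)) * g0 z := by
  have refl_alg : ∀ x : ℝ, (q (-x) + qd (-x)) * rexp (-x) = -qd x := by
    intro x
    have h1 := key_alg x
    have h2 := key_alg' x
    linarith
  set f : ℝ → ℝ := fun z => (q (a * z + a ^ 2) + qd (a * z + a ^ 2)) * g0 z with hf
  have step1 : ∫ z, f z = ∫ z, f (-z) := (integral_neg_eq_self f volume).symm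
  have step2 : ∫ z, f (-z) = ∫ z, f (-(z + 2 * a)) :=
    (integral_add_right_eq_self (fun z => f (-z)) (2 * a)).symm
  rw [step1, step2]
  congr 1
  ext z
  have harg : a * (-(z + 2 * a)) + a ^ 2 = -(a * z + a ^ 2) := by ring
  have hneg : -(z + 2 * a) = -(z + 2 * a) := rfl
  simp only [hf]
  rw [harg, show (-(z + 2 * a)) = -(z + 2 * a) from rfl]
  rw [show g0 (-(z + 2 * a)) = g0 (z + 2 * a) from g0_even _, g0_shift]
  calc (q (-(a * z + a ^ 2)) + qd (-(a * z + a ^ 2))) * (rexp (-(a * z + a ^ 2)) * g0 z)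
      = ((q (-(a * z + a ^ 2)) + qd (-(a * z + a ^ 2))) * rexp (-(a * z + a ^ 2))) * g0 z := by
        ring
    _ = (-qd (a * z + a ^ 2)) * g0 z := by rw [refl_alg]

lemma W_eq (a : ℝ) :
    ∫ z, (q (a * z + a ^ 2) + qd (a * z + a ^ 2)) * g0 z
      = (1 / 2) * ∫ z, q (a * z + a ^ 2) * g0 z := by
  have hcont_in : Continuous fun z : ℝ => a * z + a ^ 2 := by fun_prop
  have hint1 : Integrable (fun z => (q (a * z + a ^ 2) + qd (a * z + a ^ 2)) * g0 z) volume :=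
    integrable_bd_g0 _ (1 / 2 + 6) ((q_cont.comp hcont_in).add (qd_cont.comp hcont_in)) fun z =>
      (abs_add_le _ _).trans (add_le_add (q_bound _) (qd_bound _))
  have hint2 : Integrable (fun z => (-qd (a * z + a ^ 2)) * g0 z) volume :=
    integrable_bd_g0 _ 6 (qd_cont.comp hcont_in).neg fun z => by rw [abs_neg]; exact qd_bound _
  have hadd : (∫ z, (q (a * z + a ^ 2) + qd (a * z + a ^ 2)) * g0 z)
      + ∫ z, (-qd (a * z + a ^ 2)) * g0 z = ∫ z, q (a * z + a ^ 2) * g0 z := by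
    rw [← integral_add hint1 hint2]
    congr 1
    ext z
    ring
  have hrefl := reflection a
  linarith

lemma int_q_neg (a : ℝ) : ∫ z, q (a * z + a ^ 2) * g0 z < 0 := by
  have hcont_in : Continuous fun z : ℝ => a * z + a ^ 2 := by fun_prop
  have hpos : (0:ℝ) < ∫ z, (-q (a * z + a ^ 2)) * g0 z := by
    have hf0 : 0 ≤ᵐ[volume] fun z => (-q (a * z + a ^ 2)) * g0 z :=
      ae_of_all _ fun z => (mul_pos (neg_pos.mpr (q_neg _)) (g0_pos z)).le
    have hfi : Integrable (fun z => (-q (a * z + a ^ 2)) * g0 z) volume :=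
      integrable_bd_g0 _ (1 / 2) (q_cont.comp hcont_in).neg fun z => by
        rw [abs_neg]; exact q_bound _
    rw [integral_pos_iff_support_of_nonneg_ae hf0 hfi]
    have : Function.support (fun z => (-q (a * z + a ^ 2)) * g0 z) = Set.univ :=
      Set.eq_univ_of_forall fun z =>
        ne_of_gt (mul_pos (neg_pos.mpr (q_neg _)) (g0_pos z))
    rw [this, Real.volume_univ]
    exact ENNReal.zero_lt_top
  have : ∫ z, (-q (a * z + a ^ 2)) * g0 z = -∫ z, q (a * z + a ^ 2) * g0 z := by
    rw [← integral_neg]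
    congr 1; ext z; ring
  linarith [this ▸ hpos]

/-- The derivative of `Phi` is negative for positive `a`. -/
lemma Phi'_neg {a : ℝ} (ha : 0 < a) : Phi' a < 0 := by
  have hcont_in : Continuous fun z : ℝ => a * z + a ^ 2 := by fun_prop
  have h0 : Phi' a = ∫ z, (q (a * z + a ^ 2) * (z + 2 * a)) * g0 z := by
    rw [Phi', integral_nu]
  have hintA : Integrable (fun z => (q (a * z + a ^ 2) * z) * g0 z) volume := by
    have := integrable_bd_zg0 (fun z => q (a * z + a ^ 2)) (1 / 2) (q_cont.comp hcont_in)
      (fun z => q_bound _)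
    refine this.congr (ae_of_all _ fun z => by ring)
  have hintB : Integrable (fun z => (2 * a * q (a * z + a ^ 2)) * g0 z) volume :=
    integrable_bd_g0 _ (2 * |a| * (1 / 2)) (continuous_const.mul (q_cont.comp hcont_in)) fun z => by
      rw [abs_mul, abs_mul]
      have h2 : |(2:ℝ)| = 2 := by norm_num
      rw [h2]
      exact mul_le_mul_of_nonneg_left (q_bound _) (by positivity)
  have hsplit : Phi' a = (∫ z, (q (a * z + a ^ 2) * z) * g0 z)
      + ∫ z, (2 * a * q (a * z + a ^ 2)) * g0 z := by
    rw [h0, ← integral_add hintA hintB]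
    congr 1
    ext z
    ring
  have e2 : ∫ z, (2 * a * q (a * z + a ^ 2)) * g0 z
      = 2 * a * ∫ z, q (a * z + a ^ 2) * g0 z := by
    rw [← integral_const_mul]
    congr 1; ext z; ring
  have e3 : ∫ z, qd (a * z + a ^ 2) * g0 z
      = (∫ z, (q (a * z + a ^ 2) + qd (a * z + a ^ 2)) * g0 z)
        - ∫ z, q (a * z + a ^ 2) * g0 z := by
    have hint1 : Integrable (fun z => (q (a * z + a ^ 2) + qd (a * z + a ^ 2)) * g0 z) volume :=
      integrable_bd_g0 _ (1 / 2 + 6) ((q_cont.comp hcont_in).add (qd_cont.comp hcont_in)) fun z =>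
        (abs_add_le _ _).trans (add_le_add (q_bound _) (qd_bound _))
    have hint2 : Integrable (fun z => q (a * z + a ^ 2) * g0 z) volume :=
      integrable_bd_g0 _ (1 / 2) (q_cont.comp hcont_in) fun z => q_bound _
    rw [← integral_sub hint1 hint2]
    congr 1; ext z; ring
  have hq := int_q_neg a
  have hW := W_eq a
  have hst := stein a
  rw [hsplit, e2, hst, e3, hW]
  nlinarith



lemma Phi_strictAntiOn : StrictAntiOn Phi (Set.Ioi 0) := by
  refine strictAntiOn_of_deriv_neg (convex_Ioi 0)
    (fun a _ => (Phi_hasDeriv a).continuousAt.continuousWithinAt) (fun a ha => ?_)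
  rw [interior_Ioi] at ha
  rw [(Phi_hasDeriv a).deriv]
  exact Phi'_neg ha

lemma integral_S_eq_Phi {m : ℝ} (hm : 0 < m) :
    ∫ x, S x ∂(gaussianReal m (Real.toNNReal (2 * m))) = Phi (Real.sqrt m) := by
  set a := Real.sqrt m with ha
  have hapos : 0 < a := Real.sqrt_pos.mpr hm
  have haa : a * a = m := Real.mul_self_sqrt hm.le
  -- step A : map (·+a) nu = gaussianReal a 2
  have hA : (gaussianReal 0 2).map (· + a) = gaussianReal a 2 := by
    rw [gaussianReal_map_add_const a, zero_add]
  -- step B : map (a*·) (gaussianReal a 2) = gaussianReal m (toNNReal (2m))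
  have hB : (gaussianReal a 2).map (a * ·) = gaussianReal m (Real.toNNReal (2 * m)) := by
    rw [gaussianReal_map_const_mul a, haa]
    congr 1
    apply NNReal.coe_injective
    push_cast
    rw [Real.coe_toNNReal _ (by positivity)]
    nlinarith [haa]
  have hC : gaussianReal m (Real.toNNReal (2 * m))
      = nu.map ((a * ·) ∘ (· + a)) := by
    rw [← Measure.map_map (measurable_const_mul a) (measurable_add_const a), nu]
    rw [hA, hB]
  rw [hC, integral_map (by fun_prop) (S_cont.aestronglyMeasurable)]
  rw [Phi]
  refine integral_congr_ae (ae_of_all _ fun z => ?_)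
  show S (a * (z + a)) = S (a * z + a ^ 2)
  rw [show a * (z + a) = a * z + a ^ 2 by nlinarith [haa]]

lemma welfare_repr {σ r : ℝ} (hσ : 0 < σ) (hr : 0 < r) :
    welfare σ r = -Phi (Real.sqrt (2 * r / σ ^ 2)) := by
  set m := 2 * r / σ ^ 2 with hm
  have hmpos : 0 < m := by positivity
  set V := Real.toNNReal (4 * r / σ ^ 2) with hV
  have hVm : V = Real.toNNReal (2 * m) := by rw [hV, hm]; congr 1; ring
  -- first integral
  have h1 : ∫ x, (rexp x / (1 + rexp x) - 1) ^ 2 ∂(gaussianReal m V)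
      = ∫ x, S x ∂(gaussianReal m V) :=
    integral_congr_ae (ae_of_all _ fun x => integrand_one x)
  -- second integral via reflection
  have hmap : (gaussianReal m V).map ((-1 : ℝ) * ·) = gaussianReal (-m) V := by
    rw [gaussianReal_map_const_mul (-1 : ℝ)]
    congr 1
    · ring
    · apply NNReal.coe_injective
      push_cast
      norm_num
  have h2 : ∫ x, (rexp x / (1 + rexp x)) ^ 2 ∂(gaussianReal (-m) V)
      = ∫ x, S x ∂(gaussianReal m V) := by
    have hcq : Continuous fun x : ℝ => rexp x / (1 + rexp x) :=
      Real.continuous_exp.div (continuous_const.add Real.continuous_exp)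
        fun x => by positivity
    rw [← hmap, integral_map (by fun_prop) (show Continuous fun x : ℝ => (rexp x / (1 + rexp x)) ^ 2 from hcq.pow 2).aestronglyMeasurable]
    refine integral_congr_ae (ae_of_all _ fun x => ?_)
    show (rexp (-1 * x) / (1 + rexp (-1 * x))) ^ 2 = S x
    rw [show (-1 : ℝ) * x = -x by ring]
    exact integrand_two x
  rw [welfare, h1, h2, hVm, integral_S_eq_Phi hmpos]
  ring

lemma welfare_lt {σ : ℝ} (hσ : 0 < σ) {r1 r2 : ℝ} (h1 : 0 < r1) (h12 : r1 < r2) :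
    welfare σ r1 < welfare σ r2 := by
  rw [welfare_repr hσ h1, welfare_repr hσ (h1.trans h12)]
  have hd : 2 * r1 / σ ^ 2 < 2 * r2 / σ ^ 2 := by
    have hs : (0:ℝ) < σ ^ 2 := by positivity
    apply div_lt_div_of_pos_right ?_ hs
    linarith
  have hkey : Real.sqrt (2 * r1 / σ ^ 2) < Real.sqrt (2 * r2 / σ ^ 2) :=
    Real.sqrt_lt_sqrt (by positivity) hd
  have hpos1 : 0 < Real.sqrt (2 * r1 / σ ^ 2) := Real.sqrt_pos.mpr (by positivity)
  have := Phi_strictAntiOn (Set.mem_Ioi.mpr hpos1)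
    (Set.mem_Ioi.mpr (hpos1.trans hkey)) hkey
  linarith

lemma welfare_nonpos (σ r : ℝ) : welfare σ r ≤ 0 := by
  have h1 : 0 ≤ ∫ x, (rexp x / (1 + rexp x) - 1) ^ 2
      ∂(gaussianReal (2 * r / σ ^ 2) (Real.toNNReal (4 * r / σ ^ 2))) :=
    integral_nonneg fun x => sq_nonneg _
  have h2 : 0 ≤ ∫ x, (rexp x / (1 + rexp x)) ^ 2
      ∂(gaussianReal (-(2 * r / σ ^ 2)) (Real.toNNReal (4 * r / σ ^ 2))) :=
    integral_nonneg fun x => sq_nonneg _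
  rw [welfare]
  nlinarith

lemma integral_le_one_of_le (μ : Measure ℝ) [IsProbabilityMeasure μ] (f : ℝ → ℝ)
    (hc : Continuous f) (h1 : ∀ x, |f x| ≤ 1) : ∫ x, f x ∂μ ≤ 1 := by
  have hint : Integrable f μ :=
    Integrable.mono' (integrable_const 1) hc.aestronglyMeasurable (ae_of_all _ h1)
  calc ∫ x, f x ∂μ ≤ ∫ _x, (1 : ℝ) ∂μ :=
        integral_mono hint (integrable_const 1) fun x => (le_abs_self _).trans (h1 x)
    _ = 1 := by simp

lemma welfare_ge_neg_one (σ r : ℝ) : -1 ≤ welfare σ r := by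
  have hcq : Continuous fun x : ℝ => rexp x / (1 + rexp x) :=
    Real.continuous_exp.div (continuous_const.add Real.continuous_exp)
      fun x => by positivity
  have hc1 : Continuous fun x : ℝ => (rexp x / (1 + rexp x) - 1) ^ 2 :=
    (hcq.sub continuous_const).pow 2
  have hc2 : Continuous fun x : ℝ => (rexp x / (1 + rexp x)) ^ 2 := hcq.pow 2
  have hb1 : ∀ x : ℝ, |(rexp x / (1 + rexp x) - 1) ^ 2| ≤ 1 := fun x => by
    rw [abs_of_nonneg (sq_nonneg _), integrand_one]
    exact S_le_one x
  have hb2 : ∀ x : ℝ, |(rexp x / (1 + rexp x)) ^ 2| ≤ 1 := fun x => by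
    rw [abs_of_nonneg (sq_nonneg _)]
    have he := Real.exp_pos x
    have hd : rexp x / (1 + rexp x) ≤ 1 := by
      rw [div_le_one (by positivity)]
      linarith
    nlinarith [Real.exp_pos x, div_nonneg he.le (by positivity : (0:ℝ) ≤ 1 + rexp x)]
  have h1 := integral_le_one_of_le
    (gaussianReal (2 * r / σ ^ 2) (Real.toNNReal (4 * r / σ ^ 2))) _ hc1 hb1
  have h2 := integral_le_one_of_le
    (gaussianReal (-(2 * r / σ ^ 2)) (Real.toNNReal (4 * r / σ ^ 2))) _ hc2 hb2
  rw [welfare]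
  nlinarith

/-- The limit value of the welfare as the signal count tends to infinity. -/
noncomputable def wlim (σ : ℝ) : ℝ := ⨆ t : ℝ, welfare σ (max t 1)

lemma welfare_tendsto {σ : ℝ} (hσ : 0 < σ) (ρ : ℕ → ℝ) (hρ : Tendsto ρ atTop atTop) :
    Tendsto (fun i => welfare σ (ρ i)) atTop (𝓝 (wlim σ)) := by
  have hmono : Monotone fun t => welfare σ (max t 1) := by
    intro t1 t2 h
    have h1 : (0:ℝ) < max t1 1 := lt_of_lt_of_le one_pos (le_max_right _ _)
    rcases lt_or_eq_of_le (max_le_max h (le_refl (1:ℝ))) with hlt | heq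
    · exact (welfare_lt hσ h1 hlt).le
    · show welfare σ (t1 ⊔ 1) ≤ welfare σ (t2 ⊔ 1)
      rw [heq]
  have hbdd : BddAbove (Set.range fun t => welfare σ (max t 1)) := by
    refine ⟨0, ?_⟩
    rintro _ ⟨t, rfl⟩
    exact welfare_nonpos σ _
  have h1 : Tendsto (fun t => welfare σ (max t 1)) atTop (𝓝 (wlim σ)) :=
    tendsto_atTop_ciSup hmono hbdd
  have h2 : Tendsto (fun i => welfare σ (max (ρ i) 1)) atTop (𝓝 (wlim σ)) := h1.comp hρ
  refine h2.congr' ?_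
  filter_upwards [hρ.eventually_ge_atTop 1] with i hi
  rw [max_eq_left hi]


end SL


/-- Let `M` and `M′` be networks with `r_i → ∞`, `r′_i → ∞` and
strictly ranked aggregative efficiency `lim r_i/i > lim r′_i/i`. Fix `σ > 0`. Then
there is `T̄` such that for every `T ≥ T̄`, every `T`-patient social welfare
function (summable nonnegative weights `γ` vanishing before `T` and strictly
positive from `T` on, plus a weight `γ∞ ≥ 0` on the limit) strictly prefers `M`
to `M′`. -/
theorem patient_planner_prefers_efficient
    (Net Net' : ℕ → Finset ℕ)
    (hNet : ∀ i, ∀ j ∈ Net i, 1 ≤ j ∧ j < i)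
    (hNet' : ∀ i, ∀ j ∈ Net' i, 1 ≤ j ∧ j < i)
    (hr : Tendsto (fun i : ℕ => rcount Net i) atTop atTop)
    (hr' : Tendsto (fun i : ℕ => rcount Net' i) atTop atTop)
    (L L' : ℝ)
    (hL : Tendsto (fun i : ℕ => rcount Net i / (i : ℝ)) atTop (nhds L))
    (hL' : Tendsto (fun i : ℕ => rcount Net' i / (i : ℝ)) atTop (nhds L'))
    (hrank : L' < L) (σ : ℝ) (hσ : 0 < σ) :
    ∃ Tbar : ℕ, ∀ T : ℕ, Tbar ≤ T →
      ∀ γ : ℕ → ℝ, ∀ γinf : ℝ,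
        (∀ i, 0 ≤ γ i) → Summable γ →
        (∀ i, i < T → γ i = 0) → (∀ i, T ≤ i → 0 < γ i) → 0 ≤ γinf →
        (∑' i : ℕ, γ i * welfare σ (rcount Net' i))
            + γinf * (limUnder atTop (fun i : ℕ => welfare σ (rcount Net' i)))
          < (∑' i : ℕ, γ i * welfare σ (rcount Net i))
            + γinf * (limUnder atTop (fun i : ℕ => welfare σ (rcount Net i))) := by
  -- the two limit terms agree
  have hlim : limUnder atTop (fun i : ℕ => welfare σ (rcount Net i)) = SL.wlim σ :=
    (SL.welfare_tendsto hσ _ hr).limUnder_eq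
  have hlim' : limUnder atTop (fun i : ℕ => welfare σ (rcount Net' i)) = SL.wlim σ :=
    (SL.welfare_tendsto hσ _ hr').limUnder_eq
  -- eventual dominance of signal counts
  set c : ℝ := (L + L') / 2 with hc
  have hcL : c < L := by rw [hc]; linarith
  have hL'c : L' < c := by rw [hc]; linarith
  have hev1 : ∀ᶠ i : ℕ in atTop, c < rcount Net i / (i : ℝ) :=
    hL.eventually (eventually_gt_nhds hcL)
  have hev2 : ∀ᶠ i : ℕ in atTop, rcount Net' i / (i : ℝ) < c :=
    hL'.eventually (eventually_lt_nhds hL'c)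
  have hev3 : ∀ᶠ i : ℕ in atTop, (1 : ℝ) ≤ rcount Net' i := hr'.eventually_ge_atTop 1
  have hev4 : ∀ᶠ i : ℕ in atTop, (1 : ℕ) ≤ i := eventually_ge_atTop 1
  obtain ⟨N, hN⟩ := eventually_atTop.mp (((hev1.and hev2).and (hev3.and hev4)))
  have hfact : ∀ i, N ≤ i → 1 ≤ rcount Net' i ∧ rcount Net' i < rcount Net i := by
    intro i hi
    obtain ⟨⟨h1, h2⟩, h3, h4⟩ := hN i hi
    refine ⟨h3, ?_⟩
    have hipos : (0 : ℝ) < (i : ℝ) := by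
      have : (1 : ℝ) ≤ (i : ℝ) := by exact_mod_cast h4
      linarith
    have := lt_trans h2 h1
    calc rcount Net' i = rcount Net' i / (i : ℝ) * (i : ℝ) := by field_simp
      _ < rcount Net i / (i : ℝ) * (i : ℝ) := by
          exact mul_lt_mul_of_pos_right this hipos
      _ = rcount Net i := by field_simp
  refine ⟨N, fun T hT γ γinf hγ0 hγsum hγlt hγge hγinf => ?_⟩
  -- welfare comparison
  have hwle : ∀ i, T ≤ i → welfare σ (rcount Net' i) < welfare σ (rcount Net i) := by
    intro i hi
    obtain ⟨h1, h2⟩ := hfact i (le_trans hT hi)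
    exact SL.welfare_lt hσ (lt_of_lt_of_le one_pos h1) h2
  have habs : ∀ (M : ℕ → Finset ℕ) i, ‖γ i * welfare σ (rcount M i)‖ ≤ γ i := by
    intro M i
    rw [norm_eq_abs, abs_mul, abs_of_nonneg (hγ0 i)]
    have hle := SL.welfare_nonpos σ (rcount M i)
    have hge := SL.welfare_ge_neg_one σ (rcount M i)
    have : |welfare σ (rcount M i)| ≤ 1 := abs_le.mpr ⟨by linarith, by linarith⟩
    nlinarith [hγ0 i, abs_nonneg (welfare σ (rcount M i))]
  have hsum : Summable (fun i => γ i * welfare σ (rcount Net i)) :=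
    Summable.of_norm_bounded hγsum (habs Net)
  have hsum' : Summable (fun i => γ i * welfare σ (rcount Net' i)) :=
    Summable.of_norm_bounded hγsum (habs Net')
  have hterm : ∀ i, γ i * welfare σ (rcount Net' i) ≤ γ i * welfare σ (rcount Net i) := by
    intro i
    rcases lt_or_ge i T with hiT | hiT
    · rw [hγlt i hiT]
      simp
    · exact mul_le_mul_of_nonneg_left (hwle i hiT).le (hγ0 i)
  have hstrict : γ T * welfare σ (rcount Net' T) < γ T * welfare σ (rcount Net T) :=
    mul_lt_mul_of_pos_left (hwle T le_rfl) (hγge T le_rfl)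
  have hts : (∑' i, γ i * welfare σ (rcount Net' i)) < ∑' i, γ i * welfare σ (rcount Net i) :=
    Summable.tsum_lt_tsum hterm hstrict hsum' hsum
  rw [hlim, hlim']
  exact add_lt_add_left hts _
end

section
/- Let K ≥ 2 and let Ψ_k ⊆ {1,…,K} (1 ≤ k ≤ K) be symmetric observation sets with |Ψ_k| = d ≥ 1 for all k and |Ψ_{k₁} ∩ Ψ_{k₂}| = c ≥ 1 for all distinct k₁, k₂. Define the K×K row-stochastic matrix P by P_{i,j} = 1/d if j ∈ Ψ_i and P_{i,j} = 0 otherwise. Then the matrix powers P^t converge entrywise as t → ∞, and all rows of the limit are equal: there is a probability vector p* ∈ [0,1]^K with Σ_k p*_k = 1 such that lim_{t→∞} (P^t)_{i,·} = p* for every 1 ≤ i ≤ K. In particular, every function v : {1,…,K} → ℝ satisfying v(i) = (1/d)·Σ_{j∈Ψ_i} v(j) for all i is constant. -/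
open Matrix Finset Filter

lemma aux_const_of_fixed {K : ℕ} (P : Matrix (Fin K) (Fin K) ℝ) (p : Fin K → ℝ)
    (h : ∀ i j, Tendsto (fun t : ℕ => (P ^ t) i j) atTop (nhds (p j)))
    (v : Fin K → ℝ) (hv : P *ᵥ v = v) : ∀ i j, v i = v j := by
  have hpow : ∀ t : ℕ, (P ^ t) *ᵥ v = v := by
    intro t; induction t with
    | zero => simp
    | succ n ih => rw [pow_succ', ← Matrix.mulVec_mulVec, ih, hv]
  have hlim : ∀ i, v i = ∑ j, p j * v j := by
    intro i
    have h1 : Tendsto (fun t : ℕ => ∑ j, (P ^ t) i j * v j) atTop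
        (nhds (∑ j, p j * v j)) :=
      tendsto_finset_sum _ fun j _ => (h i j).mul_const _
    have h2 : (fun t : ℕ => ∑ j, (P ^ t) i j * v j) = fun _ => v i := by
      funext t
      have := congrFun (hpow t) i
      simpa [Matrix.mulVec, dotProduct] using this
    rw [h2] at h1
    exact tendsto_nhds_unique tendsto_const_nhds h1
  intro i j; rw [hlim i, hlim j]

lemma aux_degenerate (K d : ℕ) (hK : 2 ≤ K) (hd : 1 ≤ d)
    (Ψ : Fin K → Finset (Fin K)) (hcard : ∀ k, (Ψ k).card = d)
    (hinter : ∀ k₁ k₂ : Fin K, k₁ ≠ k₂ → ((Ψ k₁) ∩ (Ψ k₂)).card = d) :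
    ∀ k, Ψ k = Ψ ⟨0, by omega⟩ := by
  intro k
  set i₀ : Fin K := ⟨0, by omega⟩
  by_cases hk : k = i₀
  · rw [hk]
  · have h1 : Ψ k ∩ Ψ i₀ = Ψ k := by
      apply Finset.eq_of_subset_of_card_le Finset.inter_subset_left
      rw [hcard, hinter k i₀ hk]
    have h2 : Ψ k ⊆ Ψ i₀ := by rw [← h1]; exact Finset.inter_subset_right
    exact Finset.eq_of_subset_of_card_le h2 (by rw [hcard, hcard])

lemma aux_idem (K d : ℕ) (hK : 2 ≤ K) (hd : 1 ≤ d) (S : Finset (Fin K))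
    (hS : S.card = d) (Ψ : Fin K → Finset (Fin K)) (hall : ∀ k, Ψ k = S) :
    (Matrix.of fun a b : Fin K => if b ∈ Ψ a then 1 / (d : ℝ) else 0) *
    (Matrix.of fun a b : Fin K => if b ∈ Ψ a then 1 / (d : ℝ) else 0) =
    (Matrix.of fun a b : Fin K => if b ∈ Ψ a then 1 / (d : ℝ) else 0) := by
  have hd0 : (d : ℝ) ≠ 0 := by positivity
  ext i j
  simp only [Matrix.mul_apply, Matrix.of_apply, hall]
  simp only [ite_mul, zero_mul, Finset.sum_ite_mem, Finset.univ_inter,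
    Finset.sum_const, hS, nsmul_eq_mul]
  by_cases hj : j ∈ S <;> simp [hj] <;> field_simp

section
variable (K d c : ℕ)

lemma aux_NNt (hK : 2 ≤ K) (hc : 1 ≤ c) (hcd : c < d)
    (Ψ : Fin K → Finset (Fin K)) (hcard : ∀ k, (Ψ k).card = d)
    (hinter : ∀ k₁ k₂ : Fin K, k₁ ≠ k₂ → ((Ψ k₁) ∩ (Ψ k₂)).card = c) :
    (Matrix.of fun i j : Fin K => if j ∈ Ψ i then (1:ℝ) else 0) *
      (Matrix.of fun i j : Fin K => if j ∈ Ψ i then (1:ℝ) else 0)ᵀ =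
    ((d:ℝ) - c) • (1 : Matrix (Fin K) (Fin K) ℝ) +
      (c:ℝ) • (Matrix.of fun _ _ : Fin K => (1:ℝ)) := by
  ext i k
  simp only [Matrix.mul_apply, Matrix.transpose_apply, Matrix.of_apply,
    Matrix.add_apply, Matrix.smul_apply, Matrix.one_apply, smul_eq_mul]
  have : ∀ j : Fin K, (if j ∈ Ψ i then (1:ℝ) else 0) * (if j ∈ Ψ k then (1:ℝ) else 0)
      = if j ∈ Ψ i ∩ Ψ k then (1:ℝ) else 0 := by
    intro j
    by_cases h1 : j ∈ Ψ i <;> by_cases h2 : j ∈ Ψ k <;>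
      simp [h1, h2, Finset.mem_inter]
  rw [Finset.sum_congr rfl fun j _ => this j, Finset.sum_ite_mem,
    Finset.univ_inter, Finset.sum_const, nsmul_eq_mul, mul_one]
  by_cases hik : i = k
  · subst hik
    simp [Finset.inter_self, hcard]
  · rw [hinter i k hik]
    simp [hik]

end

lemma aux_quad {K : ℕ} (a b : ℝ) (x : Fin K → ℝ) :
    x ⬝ᵥ ((a • (1 : Matrix (Fin K) (Fin K) ℝ) +
      b • (Matrix.of fun _ _ : Fin K => (1:ℝ))) *ᵥ x) =
    a * ∑ i, (x i)^2 + b * (∑ i, x i)^2 := by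
  have hJ : (Matrix.of fun _ _ : Fin K => (1:ℝ)) *ᵥ x = fun _ => ∑ i, x i := by
    ext i; simp [Matrix.mulVec, dotProduct]
  rw [Matrix.add_mulVec, Matrix.smul_mulVec, Matrix.smul_mulVec,
    Matrix.one_mulVec, hJ, dotProduct_add, dotProduct_smul,
    dotProduct_smul]
  simp only [smul_eq_mul, dotProduct]
  rw [show ∑ i, x i * x i = ∑ i, (x i)^2 from
    Finset.sum_congr rfl fun i _ => (sq (x i)).symm, ← Finset.sum_mul, ← sq]

lemma aux_NtN (K d c : ℕ) (hK : 2 ≤ K) (hc : 1 ≤ c) (hcd : c < d)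
    (N : Matrix (Fin K) (Fin K) ℝ)
    (hNNt : N * Nᵀ = ((d:ℝ) - c) • (1 : Matrix (Fin K) (Fin K) ℝ) +
      (c:ℝ) • (Matrix.of fun _ _ : Fin K => (1:ℝ)))
    (hrow : ∀ i, ∑ j, N i j = (d:ℝ)) :
    Nᵀ * N = ((d:ℝ) - c) • (1 : Matrix (Fin K) (Fin K) ℝ) +
      (c:ℝ) • (Matrix.of fun _ _ : Fin K => (1:ℝ)) := by
  set J : Matrix (Fin K) (Fin K) ℝ := Matrix.of fun _ _ : Fin K => (1:ℝ) with hJdef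
  have hd0 : (0:ℝ) < d := by
    have : (0:ℕ) < d := by omega
    exact_mod_cast this
  have hc0 : (0:ℝ) < c := by exact_mod_cast hc
  have hdc : (0:ℝ) < (d:ℝ) - c := by
    have : (c:ℝ) < d := by exact_mod_cast hcd
    linarith
  -- quadratic form of N*Nᵀ
  have hquad : ∀ x : Fin K → ℝ, (Nᵀ *ᵥ x) ⬝ᵥ (Nᵀ *ᵥ x) =
      ((d:ℝ) - c) * ∑ i, (x i)^2 + (c:ℝ) * (∑ i, x i)^2 := by
    intro x
    have h1 : x ⬝ᵥ ((N * Nᵀ) *ᵥ x) = (Nᵀ *ᵥ x) ⬝ᵥ (Nᵀ *ᵥ x) := by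
      rw [← Matrix.mulVec_mulVec, Matrix.dotProduct_mulVec,
        Matrix.mulVec_transpose]
    rw [← h1, hNNt, aux_quad]
  -- Nᵀ is injective as mulVec, hence N is a unit
  have hinj : Function.Injective (Nᵀ).mulVec := by
    intro a b hab
    have hx : Nᵀ *ᵥ (a - b) = 0 := by
      rw [Matrix.mulVec_sub, hab, sub_self]
    have h0 : ((d:ℝ) - c) * ∑ i, ((a - b) i)^2 + (c:ℝ) * (∑ i, (a - b) i)^2 = 0 := by
      rw [← hquad, hx]; simp
    have hs1 : (0:ℝ) ≤ ∑ i, ((a - b) i)^2 :=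
      Finset.sum_nonneg fun i _ => sq_nonneg _
    have hs2 : (0:ℝ) ≤ (∑ i, (a - b) i)^2 := sq_nonneg _
    have hz : ∑ i, ((a - b) i)^2 = 0 := by nlinarith
    have : ∀ i ∈ Finset.univ, ((a - b) i)^2 = 0 :=
      (Finset.sum_eq_zero_iff_of_nonneg fun i _ => sq_nonneg _).mp hz
    have ha : a - b = 0 := funext fun i =>
      pow_eq_zero_iff two_ne_zero |>.mp (this i (Finset.mem_univ i))
    exact sub_eq_zero.mp ha
  have hunitT : IsUnit Nᵀ := Matrix.mulVec_injective_iff_isUnit.mp hinj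
  have hdet : IsUnit N.det := by
    have := Matrix.isUnit_iff_isUnit_det Nᵀ |>.mp hunitT
    rwa [Matrix.det_transpose] at this
  -- N * J = d • J
  have hNJ : N * J = (d:ℝ) • J := by
    ext i j
    simp only [Matrix.mul_apply, hJdef, Matrix.of_apply, Matrix.smul_apply,
      smul_eq_mul, mul_one]
    exact (hrow i).trans (by ring)
  have hinvJ : N⁻¹ * J = (d:ℝ)⁻¹ • J := by
    have h1 : N⁻¹ * (N * J) = N⁻¹ * ((d:ℝ) • J) := by rw [hNJ]
    rw [← mul_assoc, Matrix.nonsing_inv_mul N hdet, one_mul,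
      Matrix.mul_smul] at h1
    calc N⁻¹ * J = (d:ℝ)⁻¹ • ((d:ℝ) • (N⁻¹ * J)) := by
          rw [smul_smul, inv_mul_cancel₀ (ne_of_gt hd0), one_smul]
      _ = (d:ℝ)⁻¹ • J := by rw [← h1]
  -- Nᵀ * N = (d-c) • 1 + (c/d) • (J * N)
  have hNtN' : Nᵀ * N = ((d:ℝ) - c) • (1 : Matrix (Fin K) (Fin K) ℝ) +
      ((c:ℝ) * (d:ℝ)⁻¹) • (J * N) := by
    calc Nᵀ * N = (N⁻¹ * N) * (Nᵀ * N) := by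
          rw [Matrix.nonsing_inv_mul N hdet, one_mul]
      _ = N⁻¹ * ((N * Nᵀ) * N) := by rw [mul_assoc, ← mul_assoc N Nᵀ N]
      _ = N⁻¹ * ((((d:ℝ) - c) • (1 : Matrix (Fin K) (Fin K) ℝ) + (c:ℝ) • J) * N) := by
          rw [hNNt]
      _ = ((d:ℝ) - c) • (N⁻¹ * N) + (c:ℝ) • ((N⁻¹ * J) * N) := by
          rw [Matrix.add_mul, Matrix.smul_mul, Matrix.smul_mul, one_mul,
            mul_add, Matrix.mul_smul, Matrix.mul_smul, ← mul_assoc]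
      _ = ((d:ℝ) - c) • (1 : Matrix (Fin K) (Fin K) ℝ) +
          ((c:ℝ) * (d:ℝ)⁻¹) • (J * N) := by
          rw [Matrix.nonsing_inv_mul N hdet, hinvJ, Matrix.smul_mul, smul_smul]
  -- column sums are constant
  have hJN : ∀ i j : Fin K, (J * N) i j = ∑ k, N k j := by
    intro i j
    simp [Matrix.mul_apply, hJdef]
  have hsymm : ∀ i j : Fin K, (Nᵀ * N) i j = (Nᵀ * N) j i := by
    intro i j
    simp only [Matrix.mul_apply, Matrix.transpose_apply]
    exact Finset.sum_congr rfl fun k _ => mul_comm _ _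
  have hcol : ∀ j : Fin K, ∑ k, N k j = (d:ℝ) := by
    have hconst : ∀ i j : Fin K, ∑ k, N k i = ∑ k, N k j := by
      intro i j
      by_cases hij : i = j
      · rw [hij]
      · have h1 := hsymm i j
        rw [hNtN'] at h1
        simp only [Matrix.add_apply, Matrix.smul_apply, Matrix.one_apply,
          if_neg hij, if_neg (Ne.symm hij), smul_eq_mul, mul_zero, zero_add,
          hJN] at h1
        have hcd0 : (c:ℝ) * (d:ℝ)⁻¹ ≠ 0 := by positivity
        exact (mul_left_cancel₀ hcd0 h1).symm
    intro j
    have htot : ∑ i, ∑ k, N k i = (K:ℝ) * d := by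
      rw [Finset.sum_comm]
      rw [Finset.sum_congr rfl fun i _ => hrow i, Finset.sum_const,
        Finset.card_univ, Fintype.card_fin, nsmul_eq_mul]
    have : ∑ i : Fin K, ∑ k, N k j = (K:ℝ) * d := by
      rw [← htot]
      exact Finset.sum_congr rfl fun i _ => hconst j i
    rw [Finset.sum_const, Finset.card_univ, Fintype.card_fin, nsmul_eq_mul] at this
    have hK0 : (K:ℝ) ≠ 0 := by positivity
    exact mul_left_cancel₀ hK0 this
  -- conclude
  have hJNd : J * N = (d:ℝ) • J := by
    ext i j
    rw [hJN i j, hcol j]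
    simp [hJdef]
  rw [hNtN', hJNd, smul_smul, mul_assoc, inv_mul_cancel₀ (ne_of_gt hd0), mul_one]
lemma aux_main (K d c : ℕ) (hK : 2 ≤ K) (hc : 1 ≤ c) (hcd : c < d)
    (N : Matrix (Fin K) (Fin K) ℝ)
    (hN01 : ∀ i j, N i j * N i j = N i j)
    (hrow : ∀ i, ∑ j, N i j = (d:ℝ))
    (hNNt : N * Nᵀ = ((d:ℝ) - c) • (1 : Matrix (Fin K) (Fin K) ℝ) +
      (c:ℝ) • (Matrix.of fun _ _ : Fin K => (1:ℝ)))
    (hNtN : Nᵀ * N = ((d:ℝ) - c) • (1 : Matrix (Fin K) (Fin K) ℝ) +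
      (c:ℝ) • (Matrix.of fun _ _ : Fin K => (1:ℝ))) :
    ∀ i j : Fin K, Tendsto (fun t : ℕ => (((d:ℝ)⁻¹ • N) ^ t) i j)
      atTop (nhds ((K:ℝ)⁻¹)) := by
  intro i j
  set P : Matrix (Fin K) (Fin K) ℝ := (d:ℝ)⁻¹ • N with hPdef
  have hd0 : (0:ℝ) < d := by
    have : (0:ℕ) < d := by omega
    exact_mod_cast this
  have hK0 : (0:ℝ) < K := by
    have : (0:ℕ) < K := by omega
    exact_mod_cast this
  have hc0 : (0:ℝ) < c := by exact_mod_cast hc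
  have hdc : (0:ℝ) < (d:ℝ) - c := by
    have : (c:ℝ) < d := by exact_mod_cast hcd
    linarith
  set r : ℝ := ((d:ℝ) - c) / (d:ℝ)^2 with hrdef
  have hr0 : 0 ≤ r := by positivity
  have hd1 : (1:ℝ) ≤ d := by
    have : (1:ℕ) ≤ d := by omega
    exact_mod_cast this
  have hr1 : r < 1 := by
    rw [hrdef, div_lt_one (by positivity)]
    nlinarith [sq_nonneg ((d:ℝ) - 1)]
  -- quadratic identity for N
  have hquadN : ∀ x : Fin K → ℝ, ∑ i, ((N *ᵥ x) i)^2 =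
      ((d:ℝ) - c) * ∑ i, (x i)^2 + (c:ℝ) * (∑ i, x i)^2 := by
    intro x
    have h1 : x ⬝ᵥ ((Nᵀ * N) *ᵥ x) = (N *ᵥ x) ⬝ᵥ (N *ᵥ x) := by
      rw [← Matrix.mulVec_mulVec, Matrix.dotProduct_mulVec,
        ← Matrix.mulVec_transpose, Matrix.transpose_transpose]
    have h2 : (N *ᵥ x) ⬝ᵥ (N *ᵥ x) = ∑ i, ((N *ᵥ x) i)^2 :=
      Finset.sum_congr rfl fun i _ => (sq ((N *ᵥ x) i)).symm
    rw [← h2, ← h1, hNtN, aux_quad]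
  -- column sums of N are d
  have hcolN : ∀ jj : Fin K, ∑ k, N k jj = (d:ℝ) := by
    intro jj
    have h1 := congrFun (congrFun hNtN jj) jj
    simp only [Matrix.mul_apply, Matrix.transpose_apply, Matrix.add_apply,
      Matrix.smul_apply, Matrix.one_apply_eq, Matrix.of_apply, smul_eq_mul,
      mul_one] at h1
    rw [Finset.sum_congr rfl fun k _ => hN01 k jj] at h1
    rw [h1]; ring
  -- sum is preserved by P
  have hPsum : ∀ x : Fin K → ℝ, ∑ i, (P *ᵥ x) i = ∑ i, x i := by
    intro x
    simp only [hPdef, Matrix.smul_mulVec, Pi.smul_apply, smul_eq_mul]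
    rw [← Finset.mul_sum]
    have : ∑ i, (N *ᵥ x) i = (d:ℝ) * ∑ i, x i := by
      simp only [Matrix.mulVec, dotProduct]
      rw [Finset.sum_comm]
      rw [Finset.sum_congr rfl fun k _ => by rw [← Finset.sum_mul, hcolN k]]
      rw [← Finset.mul_sum]
    rw [this, ← mul_assoc, inv_mul_cancel₀ (ne_of_gt hd0), one_mul]
  -- quadratic contraction for P on zero-sum vectors
  have hPq0 : ∀ x : Fin K → ℝ, ∑ i, x i = 0 →
      ∑ i, ((P *ᵥ x) i)^2 = r * ∑ i, (x i)^2 := by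
    intro x hx
    simp only [hPdef, Matrix.smul_mulVec, Pi.smul_apply, smul_eq_mul]
    have hh : ∀ ii : Fin K, ((d:ℝ)⁻¹ * (N *ᵥ x) ii)^2
        = ((d:ℝ)⁻¹)^2 * ((N *ᵥ x) ii)^2 := fun ii => by ring
    rw [Finset.sum_congr rfl fun ii _ => hh ii, ← Finset.mul_sum, hquadN, hx,
      hrdef]
    field_simp
    ring
  -- row sums: P^t *ᵥ 1 = 1
  have hP1 : P *ᵥ (fun _ => (1:ℝ)) = fun _ => (1:ℝ) := by
    ext ii
    simp only [hPdef, Matrix.smul_mulVec, Pi.smul_apply, smul_eq_mul]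
    simp only [Matrix.mulVec, dotProduct, mul_one]
    rw [hrow ii, inv_mul_cancel₀ (ne_of_gt hd0)]
  have hPt1 : ∀ t : ℕ, (P ^ t) *ᵥ (fun _ => (1:ℝ)) = fun _ => (1:ℝ) := by
    intro t; induction t with
    | zero => simp
    | succ n ih => rw [pow_succ', ← Matrix.mulVec_mulVec, ih, hP1]
  -- the test vector
  set x : Fin K → ℝ := fun l => (if l = j then (1:ℝ) else 0) - (K:ℝ)⁻¹ with hxdef
  have hx0 : ∑ i, x i = 0 := by
    simp only [hxdef, Finset.sum_sub_distrib, Finset.sum_ite_eq',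
      Finset.mem_univ, if_pos, Finset.sum_const, Finset.card_univ,
      Fintype.card_fin, nsmul_eq_mul]
    rw [mul_inv_cancel₀ (ne_of_gt hK0), sub_self]
  set S : ℝ := ∑ i, (x i)^2 with hSdef
  have hS0 : 0 ≤ S := Finset.sum_nonneg fun i _ => sq_nonneg _
  have hxt : ∀ t : ℕ, (∑ ii, ((P ^ t) *ᵥ x) ii = 0) ∧
      (∑ ii, (((P ^ t) *ᵥ x) ii)^2 = r ^ t * S) := by
    intro t; induction t with
    | zero => constructor <;> simp [hx0, hSdef]
    | succ n ih =>
      have hsplit : (P ^ (n+1)) *ᵥ x = P *ᵥ ((P ^ n) *ᵥ x) := by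
        rw [pow_succ', ← Matrix.mulVec_mulVec]
      constructor
      · rw [hsplit, hPsum, ih.1]
      · rw [hsplit, hPq0 _ ih.1, ih.2, pow_succ]; ring
  -- entrywise formula
  have hentry : ∀ t : ℕ, ((P ^ t) *ᵥ x) i = (P ^ t) i j - (K:ℝ)⁻¹ := by
    intro t
    simp only [Matrix.mulVec, dotProduct, hxdef]
    rw [Finset.sum_congr rfl fun l _ => mul_sub ((P^t) i l) _ _,
      Finset.sum_sub_distrib]
    congr 1
    · have hh : ∀ l : Fin K, (P^t) i l * (if l = j then (1:ℝ) else 0)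
          = (if l = j then (P^t) i l else 0) := fun l => by
        rw [mul_ite, mul_one, mul_zero]
      rw [Finset.sum_congr rfl fun l _ => hh l, Finset.sum_ite_eq',
        if_pos (Finset.mem_univ j)]
    · have := congrFun (hPt1 t) i
      simp only [Matrix.mulVec, dotProduct, mul_one] at this
      rw [← Finset.sum_mul, this, one_mul]
  -- the bound
  have hbound : ∀ t : ℕ, |(P ^ t) i j - (K:ℝ)⁻¹| ≤ Real.sqrt (r ^ t * S) := by
    intro t
    apply Real.abs_le_sqrt
    rw [← hentry t, ← (hxt t).2]
    exact Finset.single_le_sum (f := fun ii => (((P ^ t) *ᵥ x) ii)^2)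
      (fun ii _ => sq_nonneg _) (Finset.mem_univ i)
  have htend0 : Tendsto (fun t : ℕ => Real.sqrt (r ^ t * S)) atTop (nhds 0) := by
    have h1 : Tendsto (fun t : ℕ => r ^ t * S) atTop (nhds 0) := by
      have := (tendsto_pow_atTop_nhds_zero_of_lt_one hr0 hr1).mul_const S
      simpa using this
    have h2 := (Real.continuous_sqrt.tendsto 0).comp h1
    simpa [Function.comp_def] using h2
  have hfinal : Tendsto (fun t : ℕ => (P ^ t) i j - (K:ℝ)⁻¹) atTop (nhds 0) :=
    squeeze_zero_norm (fun t => by rw [Real.norm_eq_abs]; exact hbound t) htend0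
  have := hfinal.add_const ((K:ℝ)⁻¹)
  simpa using this

/-- Let `Ψ_1,…,Ψ_K` be symmetric observation sets on `K ≥ 2`
positions with `|Ψ_k| = d ≥ 1` and `|Ψ_{k₁} ∩ Ψ_{k₂}| = c ≥ 1` for distinct
`k₁, k₂`, and let `P` be the row-stochastic matrix of the associated Markov chain
(`P_{i,j} = 1/d` if `j ∈ Ψ_i`, else `0`). Then the matrix powers `P^t` converge
entrywise to a limit all of whose rows equal a single probability vector `p*`;
in particular every `v` with `v(i) = (1/d)·Σ_{j∈Ψ_i} v(j)` for all `i` is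
constant. -/
theorem symmetric_markov_chain_mixing (K d c : ℕ) (hK : 2 ≤ K) (hd : 1 ≤ d)
    (hc : 1 ≤ c) (Ψ : Fin K → Finset (Fin K))
    (hcard : ∀ k, (Ψ k).card = d)
    (hinter : ∀ k₁ k₂ : Fin K, k₁ ≠ k₂ → ((Ψ k₁) ∩ (Ψ k₂)).card = c) :
    (∃ p : Fin K → ℝ, (∀ k, 0 ≤ p k) ∧ (∀ k, p k ≤ 1) ∧ (∑ k, p k) = 1 ∧
      ∀ i j : Fin K,
        Tendsto
          (fun t : ℕ =>
            ((Matrix.of fun a b : Fin K =>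
              if b ∈ Ψ a then 1 / (d : ℝ) else 0) ^ t) i j)
          atTop (nhds (p j))) ∧
    (∀ v : Fin K → ℝ,
      (∀ i, v i = (1 / (d : ℝ)) * ∑ j ∈ Ψ i, v j) → ∀ i j, v i = v j) := by
  have hd0 : (0:ℝ) < d := by
    have : (0:ℕ) < d := by omega
    exact_mod_cast this
  set P : Matrix (Fin K) (Fin K) ℝ :=
    Matrix.of fun a b : Fin K => if b ∈ Ψ a then 1 / (d : ℝ) else 0 with hPdef
  -- c ≤ d
  have hcled : c ≤ d := by
    have hne : (⟨0, by omega⟩ : Fin K) ≠ ⟨1, by omega⟩ := by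
      simp [Fin.ext_iff]
    calc c = ((Ψ ⟨0, by omega⟩) ∩ (Ψ ⟨1, by omega⟩)).card :=
          (hinter _ _ hne).symm
      _ ≤ (Ψ ⟨0, by omega⟩).card := Finset.card_le_card Finset.inter_subset_left
      _ = d := hcard _
  have hmain : ∃ p : Fin K → ℝ, (∀ k, 0 ≤ p k) ∧ (∀ k, p k ≤ 1) ∧
      (∑ k, p k) = 1 ∧ ∀ i j : Fin K,
        Tendsto (fun t : ℕ => (P ^ t) i j) atTop (nhds (p j)) := by
    rcases lt_or_eq_of_le hcled with hcd | hcd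
    · -- main case : c < d
      set N : Matrix (Fin K) (Fin K) ℝ :=
        Matrix.of fun i j : Fin K => if j ∈ Ψ i then (1:ℝ) else 0 with hNdef
      have hPN : P = (d:ℝ)⁻¹ • N := by
        ext i j
        simp only [hPdef, hNdef, Matrix.of_apply, Matrix.smul_apply, smul_eq_mul]
        by_cases h : j ∈ Ψ i <;> simp [h, one_div]
      have hN01 : ∀ i j, N i j * N i j = N i j := by
        intro i j
        simp only [hNdef, Matrix.of_apply]
        by_cases h : j ∈ Ψ i <;> simp [h]
      have hrow : ∀ i, ∑ j, N i j = (d:ℝ) := by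
        intro i
        simp only [hNdef, Matrix.of_apply]
        rw [Finset.sum_ite_mem, Finset.univ_inter, Finset.sum_const, hcard,
          nsmul_eq_mul, mul_one]
      have hNNt := aux_NNt K d c hK hc hcd Ψ hcard hinter
      rw [← hNdef] at hNNt
      have hNtN := aux_NtN K d c hK hc hcd N hNNt hrow
      refine ⟨fun _ => (K:ℝ)⁻¹, fun k => by positivity, fun k => ?_, ?_, ?_⟩
      · rw [inv_le_one_iff₀]
        right
        have : (1:ℕ) ≤ K := by omega
        exact_mod_cast this
      · rw [Finset.sum_const, Finset.card_univ, Fintype.card_fin, nsmul_eq_mul,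
          mul_inv_cancel₀]
        have : (0:ℕ) < K := by omega
        positivity
      · intro i j
        rw [hPN]
        exact aux_main K d c hK hc hcd N hN01 hrow hNNt hNtN i j
    · -- degenerate case : c = d
      subst hcd
      have hall := aux_degenerate K c hK (by omega) Ψ hcard hinter
      set i₀ : Fin K := ⟨0, by omega⟩
      have hPP : P * P = P := aux_idem K c hK hc (Ψ i₀) (hcard i₀) Ψ hall
      have hpow : ∀ t : ℕ, 1 ≤ t → P ^ t = P := by
        intro t ht
        induction t with
        | zero => omega
        | succ n ih =>
          rcases Nat.eq_or_lt_of_le ht with h1 | h1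
          · rw [← h1, pow_one]
          · rw [pow_succ, ih (by omega), hPP]
      refine ⟨fun j => if j ∈ Ψ i₀ then 1/(c:ℝ) else 0, fun k => ?_, fun k => ?_,
        ?_, ?_⟩
      · by_cases h : k ∈ Ψ i₀ <;> simp [h] <;> positivity
      · by_cases h : k ∈ Ψ i₀
        · simp only [h, if_true]
          rw [div_le_one hd0]
          exact_mod_cast hc
        · simp [h]
      · rw [Finset.sum_ite_mem, Finset.univ_inter, Finset.sum_const, hcard,
          nsmul_eq_mul, mul_one_div, div_self (ne_of_gt hd0)]
      · intro i j
        apply tendsto_atTop_of_eventually_const (i₀ := 1)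
        intro t ht
        rw [hpow t ht, hPdef]
        simp only [Matrix.of_apply, hall i]
  refine ⟨hmain, ?_⟩
  obtain ⟨p, -, -, -, hten⟩ := hmain
  intro v hv
  apply aux_const_of_fixed P p hten v
  ext i
  simp only [hPdef, Matrix.mulVec, dotProduct, Matrix.of_apply, ite_mul,
    zero_mul]
  rw [Finset.sum_ite_mem, Finset.univ_inter]
  rw [show ∑ j ∈ Ψ i, 1/(d:ℝ) * v j = (1/(d:ℝ)) * ∑ j ∈ Ψ i, v j from
    (Finset.mul_sum _ _ _).symm]
  exact (hv i).symm
end
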